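/- arXiv:2302.01253 — 3 statements merged into one kernel-verified Lean document; each statement's English description precedes it below -/
import Mathlib

section
/- For every nonnegative integer n, Σ_{j ∈ ℤ} (-1)^j Q_2(n - 3j(3j-1)/2) equals 1 if n = k(3k-2) for some integer k, and 0 otherwise; here Q_2(x) = 0 for x negative. -/
open Finset

/-- Number of partitions of `n` into distinct parts not congruent to ±2 mod 6. -/
def Q2 (n : ℕ) : ℕ :=
  Fintype.card {P : Nat.Partition n // P.parts.Nodup ∧ ∀ i ∈ P.parts, i % 6 ≠ 2 ∧ i % 6 ≠ 4}

/-- `Q2` extended to integers, `0` on negatives. -/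
def Q2z (x : ℤ) : ℤ := if 0 ≤ x then Q2 x.toNat else 0

namespace Oct
variable {R : Type*} [CommRing R]

def gb (q : R) : ℕ → ℕ → R
  | 0, 0 => 1
  | 0, _+1 => 0
  | m+1, 0 => gb q m 0
  | m+1, r+1 => gb q m (r+1) + q^(m-r) * gb q m r

@[simp] lemma gb_zero (q : R) : ∀ m, gb q m 0 = 1
  | 0 => rfl
  | m+1 => gb_zero q m

lemma gb_succ_succ (q : R) (m r : ℕ) :
    gb q (m+1) (r+1) = gb q m (r+1) + q^(m-r) * gb q m r := rfl

lemma gb_of_lt (q : R) : ∀ {m r}, m < r → gb q m r = 0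
  | 0, r+1, _ => rfl
  | m+1, r+1, h => by
    rw [gb_succ_succ, gb_of_lt (q := q) (by omega), gb_of_lt (q := q) (by omega)]
    ring

@[simp] lemma gb_self (q : R) : ∀ m, gb q m m = 1
  | 0 => rfl
  | m+1 => by
    rw [gb_succ_succ, gb_of_lt q (by omega), gb_self q m, Nat.sub_self, pow_zero]; ring



-- auxiliary: gb (m+1) 1 = q * gb m 1 + 1
lemma gb_one_succ (q : R) : ∀ m, gb q (m+1) 1 = q * gb q m 1 + 1
  | 0 => by simp [gb]
  | m+1 => by
    have ih := gb_one_succ q m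
    have p1 : gb q (m+1+1) 1 = gb q (m+1) 1 + q^(m+1) := by
      rw [gb_succ_succ, gb_zero, Nat.sub_zero, mul_one]
    have p1' : gb q (m+1) 1 = gb q m 1 + q^m := by
      rw [gb_succ_succ, gb_zero, Nat.sub_zero, mul_one]
    rw [p1]
    linear_combination ih - q * p1'

-- second Pascal recurrence
lemma gb_P2 (q : R) : ∀ m r, gb q (m+1) (r+1) = q^(r+1) * gb q m (r+1) + gb q m r
  | m, 0 => by
    have := gb_one_succ q m
    rw [this, gb_zero, pow_one]
  | 0, r+1 => by
    rw [gb_of_lt q (by omega), gb_of_lt q (by omega), gb_of_lt q (by omega)]; ring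
  | m+1, r+1 => by
    rcases lt_or_ge m r with h | h
    · rw [gb_of_lt q (by omega), gb_of_lt q (by omega), gb_of_lt q (by omega)]; ring
    · rcases Nat.eq_or_lt_of_le h with rfl | hrm
      · rw [gb_self, gb_of_lt q (by omega), gb_self]; ring
      · -- r < m
        have e2 := gb_P2 q m (r+1)
        have e3 := gb_P2 q m r
        have e4 := gb_succ_succ q m (r+1)
        have e5 := gb_succ_succ q m r
        have hP : q^((m+1)-(r+1)) = q^(m-r) := by congr 1; omega
        have hq1 : q^(m-r) * q^(r+1) = q^(m+1) := by rw [← pow_add]; congr 1; omega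
        have hq2 : q^(r+1+1) * q^(m-(r+1)) = q^(m+1) := by rw [← pow_add]; congr 1; omega
        rw [gb_succ_succ q (m+1) (r+1), hP]
        linear_combination e2 - q^(r+1+1) * e4 + q^(m-r) * e3 - e5 +
          gb q m (r+1) * (hq1 - hq2)

-- symmetry
lemma gb_symm (q : R) : ∀ m r, r ≤ m → gb q m r = gb q m (m - r)
  | 0, 0, _ => rfl
  | m+1, 0, _ => by simp
  | m+1, r+1, h => by
    rcases Nat.eq_or_lt_of_le h with hh | hh
    · rw [hh]; simp
    · -- r + 1 ≤ m, so r < m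
      have hr : r + 1 ≤ m := by omega
      have e1 := gb_succ_succ q m r
      have hmr : m + 1 - (r+1) = (m - r - 1) + 1 := by omega
      have e2 := gb_P2 q m (m - r - 1)
      have i1 := gb_symm q m r (by omega)
      have i2 := gb_symm q m (r+1) hr
      rw [gb_succ_succ q m r, hmr, e2, i1, i2]
      have h1 : m - r - 1 + 1 = m - r := by omega
      have h3 : m - (r + 1) = m - r - 1 := by omega
      rw [h1, h3]
      ring


@[simp] lemma gb_zero_left (q : R) (k : ℕ) : gb q 0 (k+1) = 0 := rfl

-- q-Vandermonde
lemma gb_vdm (q : R) (m : ℕ) : ∀ n r, gb q (m + n) r =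
    ∑ j ∈ range (r+1), q^((m-j)*(r-j)) * gb q m j * gb q n (r-j) := by
  intro n
  induction n with
  | zero =>
    intro r
    rw [Finset.sum_eq_single r]
    · simp
    · intro j hj hne
      have : r - j = (r - j - 1) + 1 := by simp at hj; omega
      rw [this, gb_zero_left, mul_zero]
    · intro h; simp at h
  | succ n ih =>
    intro r
    match r with
    | 0 => simp
    | t+1 =>
      have key : gb q (m + (n+1)) (t+1) = gb q (m+n) (t+1) + q^((m+n)-t) * gb q (m+n) t := by
        have : m + (n+1) = (m+n)+1 := by omega
        rw [this, gb_succ_succ]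
      rw [key, ih (t+1), ih t]
      -- RHS target: split off j = t+1 and expand gb (n+1) (t+1-j) for j ≤ t
      have expand : ∀ j ∈ range (t+1),
          q^((m-j)*(t+1-j)) * gb q m j * gb q (n+1) (t+1-j)
          = q^((m-j)*(t+1-j)) * gb q m j * gb q n (t+1-j)
            + q^((m-j)*(t+1-j)) * q^(n-(t-j)) * gb q m j * gb q n (t-j) := by
        intro j hj
        simp only [mem_range] at hj
        have h1 : t + 1 - j = (t - j) + 1 := by omega
        rw [h1, gb_succ_succ]
        ring
      rw [Finset.sum_range_succ (fun j => q^((m-j)*(t+1-j)) * gb q m j * gb q (n+1) (t+1-j)),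
          Finset.sum_congr rfl expand, Finset.sum_add_distrib]
      rw [Finset.sum_range_succ (fun j => q^((m-j)*(t+1-j)) * gb q m j * gb q n (t+1-j))]
      have last1 : q^((m-(t+1))*(t+1-(t+1))) * gb q m (t+1) * gb q n (t+1-(t+1)) =
          gb q m (t+1) := by simp
      have last2 : q^((m-(t+1))*(t+1-(t+1))) * gb q m (t+1) * gb q (n+1) (t+1-(t+1)) =
          gb q m (t+1) := by simp
      rw [last1, last2, Finset.mul_sum]
      have congr2 : ∀ j ∈ range (t+1),
          q^((m+n)-t) * (q^((m-j)*(t-j)) * gb q m j * gb q n (t-j))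
          = q^((m-j)*(t+1-j)) * q^(n-(t-j)) * gb q m j * gb q n (t-j) := by
        intro j hj
        simp only [mem_range] at hj
        by_cases hjm : j ≤ m
        · by_cases htn : t - j ≤ n
          · have : q^((m+n)-t) * q^((m-j)*(t-j)) = q^((m-j)*(t+1-j)) * q^(n-(t-j)) := by
              rw [← pow_add, ← pow_add]
              congr 1
              have h1 : t+1-j = (t-j)+1 := by omega
              rw [h1, Nat.mul_succ]
              have h2 : (m-j)*(t-j) = (m-j)*(t-j) := rfl
              generalize (m-j)*(t-j) = P
              omega
            linear_combination gb q m j * gb q n (t-j) * this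
          · rw [gb_of_lt q (m := n) (r := t - j) (by omega)]; ring
        · rw [gb_of_lt q (m := m) (r := j) (by omega)]; ring
      rw [Finset.sum_congr rfl congr2]
      ring

-- product formula: ∏ (1-q^i) * gb (a+b) a = ∏ (1-q^(b+i))
lemma gb_prod_formula (q : R) : ∀ a b,
    (∏ i ∈ range a, (1 - q^(i+1))) * gb q (a+b) a = ∏ i ∈ range a, (1 - q^(b+i+1))
  | 0, b => by simp
  | t+1, 0 => by simp
  | t+1, b+1 => by
    have ihInner := gb_prod_formula q (t+1) b
    have ihOuter := gb_prod_formula q t (b+1)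
    have key : gb q ((t+1)+(b+1)) (t+1) = gb q (t+1+b) (t+1) + q^(b+1) * gb q (t+(b+1)) t := by
      have h1 : (t+1)+(b+1) = ((t+1)+b)+1 := by omega
      rw [h1, gb_succ_succ]
      have h2 : t+1+b-t = b+1 := by omega
      have h3 : t+1+b = t+(b+1) := by omega
      rw [h2, h3]
    rw [key, mul_add, ihInner,
        Finset.prod_range_succ (fun i => 1 - q^(i+1)),
        Finset.prod_range_succ' (fun i => 1 - q^(b+i+1)),
        Finset.prod_range_succ (fun i => 1 - q^((b+1)+i+1))]
    have c1 : (∏ i ∈ range t, (1 - q^(b+(i+1)+1))) = ∏ i ∈ range t, (1 - q^((b+1)+i+1)) :=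
      Finset.prod_congr rfl (fun i _ => by rw [show b+(i+1)+1 = (b+1)+i+1 from by omega])
    rw [c1]
    linear_combination ((1-q^(t+1)) * q^(b+1)) * ihOuter
  termination_by a b => (a, b)

-- Cauchy q-binomial theorem
lemma cauchy_binomial (q z : R) : ∀ m, ∏ i ∈ range m, (1 + z * q^i) =
    ∑ r ∈ range (m+1), q^(r.choose 2) * gb q m r * z^r := by
  intro m
  induction m with
  | zero => simp
  | succ m ih =>
    rw [Finset.prod_range_succ, ih]
    -- target sum over range (m+2); split first term and shift
    rw [Finset.sum_range_succ' (fun r => q^(r.choose 2) * gb q (m+1) r * z^r)]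
    have expand : ∀ s ∈ range (m+1),
        q^((s+1).choose 2) * gb q (m+1) (s+1) * z^(s+1)
        = q^((s+1).choose 2) * gb q m (s+1) * z^(s+1)
          + q^((s+1).choose 2) * q^(m-s) * gb q m s * z^(s+1) := by
      intro s hs
      rw [gb_succ_succ]
      ring
    rw [Finset.sum_congr rfl expand, Finset.sum_add_distrib]
    have c2 : ∀ s ∈ range (m+1),
        q^((s+1).choose 2) * q^(m-s) * gb q m s * z^(s+1)
        = (q^(s.choose 2) * gb q m s * z^s) * (z * q^m) := by
      intro s hs
      simp only [mem_range] at hs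
      have : q^((s+1).choose 2) * q^(m-s) = q^(s.choose 2) * q^m := by
        rw [← pow_add, ← pow_add]
        congr 1
        have hch : (s+1).choose 2 = s + s.choose 2 := by
          simp [Nat.choose_succ_succ, Nat.choose_one_right]
        omega
      linear_combination gb q m s * z^(s+1) * this + (gb q m s * q^(s.choose 2) * q^m) * (pow_succ z s - pow_succ z s)
    rw [Finset.sum_congr rfl c2, ← Finset.sum_mul]
    -- first piece: Σ_{s<m+1} q^{C(s+1,2)} gb m (s+1) z^{s+1} + q^{C0}gb(m+1,0)z^0  = Σ_{r<m+2} ...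
    have c3 : (∑ s ∈ range (m+1), q^((s+1).choose 2) * gb q m (s+1) * z^(s+1))
          + q^((0:ℕ).choose 2) * gb q (m+1) 0 * z^0
        = ∑ r ∈ range (m+2), q^(r.choose 2) * gb q m r * z^r := by
      rw [Finset.sum_range_succ' (fun r => q^(r.choose 2) * gb q m r * z^r)]
      simp
    have c4 : (∑ r ∈ range (m+2), q^(r.choose 2) * gb q m r * z^r)
        = ∑ r ∈ range (m+1), q^(r.choose 2) * gb q m r * z^r := by
      rw [Finset.sum_range_succ]
      rw [gb_of_lt q (by omega)]
      ring
    linear_combination -c3 - c4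


lemma chooseId : ∀ s c : ℕ, (s+c).choose 2 + s.choose 2 + s = c.choose 2 + s*(s+c)
  | 0, c => by simp
  | s+1, c => by
    have ih := chooseId s c
    have h1 : (s+1+c).choose 2 = (s+c) + (s+c).choose 2 := by
      simp [show s+1+c = (s+c)+1 from by omega, Nat.choose_succ_succ, Nat.choose_one_right]
    have h2 : (s+1).choose 2 = s + s.choose 2 := by
      simp [Nat.choose_succ_succ, Nat.choose_one_right]
    have h3 : (s+1)*(s+1+c) = s*(s+c)+2*s+c+1 := by ring
    omega

-- the key inner-sum evaluation
lemma master_key (q : R) (N c : ℕ) (hc : c ≤ N) :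
    ∑ s ∈ range (N-c+1), q^((s+c).choose 2 + s.choose 2 + s) * (gb q N (s+c) * gb q N s)
      = q^(c.choose 2) * gb q (2*N) (N+c) := by
  have vdm := gb_vdm q N N (N+c)
  rw [two_mul, vdm]
  -- restrict RHS sum to j ∈ Icc c N
  rw [← Finset.sum_subset (s₁ := Finset.Icc c N) (s₂ := range (N+c+1))
      (by intro j hj; simp only [Finset.mem_Icc] at hj; simp only [mem_range]; omega)
      (by
        intro j hj hnot
        simp only [mem_range] at hj
        simp only [Finset.mem_Icc, not_and_or, not_le] at hnot
        rcases hnot with h | h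
        · rw [gb_of_lt q (m := N) (r := N+c-j) (by omega)]; ring
        · rw [gb_of_lt q (m := N) (r := j) (by omega)]; ring)]
  rw [Finset.mul_sum]
  refine Finset.sum_nbij' (i := fun s => N - s) (j := fun j => N - j) ?_ ?_ ?_ ?_ ?_
  · intro s hs; simp only [mem_range] at hs; simp only [Finset.mem_Icc]; omega
  · intro j hj; simp only [Finset.mem_Icc] at hj; simp only [mem_range]; omega
  · intro s hs; simp only [mem_range] at hs; show N - (N - s) = s; omega
  · intro j hj; simp only [Finset.mem_Icc] at hj; show N - (N - j) = j; omega
  · intro s hs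
    simp only [mem_range] at hs
    have e1 : N + c - (N - s) = c + s := by omega
    have e2 : N - (N - s) = s := by omega
    have e3 : gb q N (N - s) = gb q N s := by
      rw [gb_symm q N (N-s) (by omega), e2]
    rw [e1, e3, e2, show c+s = s+c from by omega]
    have hq : q^(c.choose 2) * q^(s*(s+c)) = q^((s+c).choose 2 + s.choose 2 + s) := by
      rw [← pow_add]
      congr 1
      have := chooseId s c
      omega
    linear_combination (-(gb q N (s+c) * gb q N s)) * hq


noncomputable def wt (A B : R) (k : ℤ) : R :=
  if 0 ≤ k then A^k.toNat * (A*B)^(k.toNat.choose 2) else B^k.natAbs * (A*B)^(k.natAbs.choose 2)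

theorem master (A B : R) (N : ℕ) :
    ∏ i ∈ range N, ((1 + A*(A*B)^i) * (1 + B*(A*B)^i))
      = ∑ k ∈ Finset.Icc (-(N:ℤ)) (N:ℤ), wt A B k * gb (A*B) (2*N) (N + k).toNat := by
  set q : R := A * B with hq
  rw [Finset.prod_mul_distrib, cauchy_binomial q A N, cauchy_binomial q B N]
  rw [Finset.sum_mul_sum, ← Finset.sum_product']
  rw [← Finset.sum_fiberwise_of_maps_to (g := fun p : ℕ × ℕ => (p.1 : ℤ) - (p.2 : ℤ))
      (t := Finset.Icc (-(N:ℤ)) (N:ℤ))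
      (by
        intro p hp
        simp only [Finset.mem_product, mem_range] at hp
        simp only [Finset.mem_Icc]
        omega)]
  refine Finset.sum_congr rfl (fun k hk => ?_)
  simp only [Finset.mem_Icc] at hk
  by_cases hk0 : 0 ≤ k
  · set c : ℕ := k.toNat with hc
    have hcN : c ≤ N := by omega
    have step : ∑ p ∈ ((range (N+1)) ×ˢ (range (N+1))).filter
          (fun p : ℕ × ℕ => (p.1 : ℤ) - (p.2 : ℤ) = k),
          q^(p.1.choose 2) * gb q N p.1 * A^p.1 * (q^(p.2.choose 2) * gb q N p.2 * B^p.2)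
        = ∑ s ∈ range (N-c+1),
            A^c * (q^((s+c).choose 2 + s.choose 2 + s) * (gb q N (s+c) * gb q N s)) := by
      refine Finset.sum_nbij' (i := fun p => p.2) (j := fun s => (s+c, s)) ?_ ?_ ?_ ?_ ?_
      · intro p hp
        simp only [Finset.mem_filter, Finset.mem_product, mem_range] at hp
        simp only [mem_range]
        omega
      · intro s hs
        simp only [mem_range] at hs
        simp only [Finset.mem_filter, Finset.mem_product, mem_range]
        refine ⟨⟨by omega, by omega⟩, by push_cast; omega⟩
      · intro p hp
        simp only [Finset.mem_filter, Finset.mem_product, mem_range] at hp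
        have : p.2 + c = p.1 := by omega
        exact Prod.ext this rfl
      · intro s hs; rfl
      · intro p hp
        simp only [Finset.mem_filter, Finset.mem_product, mem_range] at hp
        have hp1 : p.1 = p.2 + c := by omega
        rw [hp1]
        have hpow : A^(p.2+c) * B^(p.2) = A^c * q^(p.2) := by rw [hq]; ring
        set s := p.2
        linear_combination (q^((s+c).choose 2) * gb q N (s+c) * q^(s.choose 2) * gb q N s) * hpow
    rw [step, ← Finset.mul_sum, master_key q N c hcN]
    have h1 : (N + k).toNat = N + c := by omega
    rw [h1, wt, if_pos hk0, ← hq, ← hc]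
    ring
  · set c : ℕ := k.natAbs with hc
    have hcN : c ≤ N := by omega
    have step : ∑ p ∈ ((range (N+1)) ×ˢ (range (N+1))).filter
          (fun p : ℕ × ℕ => (p.1 : ℤ) - (p.2 : ℤ) = k),
          q^(p.1.choose 2) * gb q N p.1 * A^p.1 * (q^(p.2.choose 2) * gb q N p.2 * B^p.2)
        = ∑ s ∈ range (N-c+1),
            B^c * (q^((s+c).choose 2 + s.choose 2 + s) * (gb q N (s+c) * gb q N s)) := by
      refine Finset.sum_nbij' (i := fun p => p.1) (j := fun s => (s, s+c)) ?_ ?_ ?_ ?_ ?_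
      · intro p hp
        simp only [Finset.mem_filter, Finset.mem_product, mem_range] at hp
        simp only [mem_range]
        omega
      · intro s hs
        simp only [mem_range] at hs
        simp only [Finset.mem_filter, Finset.mem_product, mem_range]
        refine ⟨⟨by omega, by omega⟩, by push_cast; omega⟩
      · intro p hp
        simp only [Finset.mem_filter, Finset.mem_product, mem_range] at hp
        have : p.1 + c = p.2 := by omega
        exact Prod.ext rfl this
      · intro s hs; rfl
      · intro p hp
        simp only [Finset.mem_filter, Finset.mem_product, mem_range] at hp
        have hp2 : p.2 = p.1 + c := by omega
        rw [hp2]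
        have hpow : A^(p.1) * B^(p.1+c) = B^c * q^(p.1) := by rw [hq]; ring
        set s := p.1
        linear_combination (q^((s+c).choose 2) * gb q N (s+c) * q^(s.choose 2) * gb q N s) * hpow
    rw [step, ← Finset.mul_sum, master_key q N c hcN]
    have h1 : (N + k).toNat = N - c := by omega
    have h2 : gb q (2*N) (N - c) = gb q (2*N) (N + c) := by
      rw [gb_symm q (2*N) (N-c) (by omega)]
      congr 1
      omega
    rw [h1, h2, wt, if_neg hk0, ← hq, ← hc]
    ring


-- ===== truncation machinery over Polynomial ℤ =====
def EqN (n : ℕ) (P Q : Polynomial ℤ) : Prop := ∀ d ≤ n, P.coeff d = Q.coeff d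

lemma EqN.refl (n : ℕ) (P : Polynomial ℤ) : EqN n P P := fun _ _ => rfl

lemma EqN.trans {n : ℕ} {P Q S : Polynomial ℤ} (h1 : EqN n P Q) (h2 : EqN n Q S) : EqN n P S :=
  fun d hd => (h1 d hd).trans (h2 d hd)

lemma EqN.symm {n : ℕ} {P Q : Polynomial ℤ} (h : EqN n P Q) : EqN n Q P :=
  fun d hd => (h d hd).symm

lemma EqN.mul {n : ℕ} {P P' Q Q' : Polynomial ℤ} (h1 : EqN n P P') (h2 : EqN n Q Q') :
    EqN n (P * Q) (P' * Q') := by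
  intro d hd
  rw [Polynomial.coeff_mul, Polynomial.coeff_mul]
  refine Finset.sum_congr rfl (fun x hx => ?_)
  rw [Finset.HasAntidiagonal.mem_antidiagonal] at hx
  rw [h1 x.1 (by omega), h2 x.2 (by omega)]

lemma EqN.prod {n : ℕ} {m : ℕ} {f g : ℕ → Polynomial ℤ}
    (h : ∀ i ∈ range m, EqN n (f i) (g i)) :
    EqN n (∏ i ∈ range m, f i) (∏ i ∈ range m, g i) := by
  induction m with
  | zero => exact EqN.refl n 1
  | succ m ih =>
    rw [Finset.prod_range_succ, Finset.prod_range_succ]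
    exact EqN.mul (ih (fun i hi => h i (by simp at hi ⊢; omega)))
      (h m (by simp))

lemma EqN_one_sub_X_pow {n e : ℕ} (he : n < e) : EqN n (1 - Polynomial.X ^ e) 1 := by
  intro d hd
  rw [Polynomial.coeff_sub, Polynomial.coeff_X_pow, if_neg (by omega)]
  ring

lemma EqN_prod_one_sub {n m : ℕ} {f : ℕ → ℕ} (hf : ∀ i ∈ range m, n < f i) :
    EqN n (∏ i ∈ range m, (1 - Polynomial.X ^ (f i))) 1 := by
  have := EqN.prod (n := n) (m := m) (f := fun i => 1 - Polynomial.X ^ (f i)) (g := fun _ => 1)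
    (fun i hi => EqN_one_sub_X_pow (hf i hi))
  simpa using this

lemma EqN_X_pow_mul {n e : ℕ} (he : n < e) (P Q : Polynomial ℤ) :
    EqN n (Polynomial.X ^ e * P) (Polynomial.X ^ e * Q) := by
  intro d hd
  rw [mul_comm, mul_comm (Polynomial.X ^ e) Q,
    Polynomial.coeff_mul_X_pow', Polynomial.coeff_mul_X_pow',
    if_neg (by omega), if_neg (by omega)]

-- ===== cleanup: (∏ (1-q^{i+1})) * gb q (2M) (M+k).toNat ≡ 1 =====
lemma cleanup (n c M : ℕ) (k : ℤ) (hkM : k.natAbs ≤ M)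
    (hbig : n + 1 ≤ c * (M - k.natAbs + 1)) :
    EqN n ((∏ i ∈ range M, (1 - (Polynomial.X : Polynomial ℤ)^(c*(i+1))))
      * gb ((Polynomial.X : Polynomial ℤ)^c) (2*M) ((M:ℤ) + k).toNat) 1 := by
  set X : Polynomial ℤ := Polynomial.X with hX
  set q : Polynomial ℤ := X^c with hq
  set a : ℕ := M - k.natAbs with ha
  have hc : 1 ≤ c := by by_contra h; push_neg at h; interval_cases c <;> omega
  have hgb : gb q (2*M) ((M:ℤ) + k).toNat = gb q (2*M) a := by
    rcases le_or_gt 0 k with h | h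
    · have h1 : ((M:ℤ) + k).toNat = M + k.natAbs := by omega
      rw [h1, gb_symm q (2*M) (M + k.natAbs) (by omega)]
      congr 1
      omega
    · congr 1
      omega
  rw [hgb]
  have hfac : ∀ i, (1 - X^(c*(i+1))) = (1 - q^(i+1)) := by
    intro i
    rw [hq, ← pow_mul]
  have hsplit : (∏ i ∈ range M, (1 - X^(c*(i+1))))
      = (∏ i ∈ range a, (1 - q^(i+1))) * (∏ i ∈ range (M-a), (1 - q^(a+i+1))) := by
    have hM : M = a + (M - a) := by omega
    rw [Finset.prod_congr rfl (fun i _ => hfac i)]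
    conv_lhs => rw [hM]
    rw [Finset.prod_range_add]
  rw [hsplit]
  have hpf := gb_prod_formula q a (2*M - a)
  have h2M : a + (2*M - a) = 2*M := by omega
  rw [h2M] at hpf
  rw [show (∏ i ∈ range a, (1 - q^(i+1))) * (∏ i ∈ range (M-a), (1 - q^(a+i+1))) * gb q (2*M) a
      = (∏ i ∈ range (M-a), (1 - q^(a+i+1))) * ((∏ i ∈ range a, (1 - q^(i+1))) * gb q (2*M) a)
      from by ring, hpf]
  have e1 : EqN n (∏ i ∈ range (M-a), (1 - q^(a+i+1))) 1 := by
    have hr : ∀ i : ℕ, (1 - q^(a+i+1)) = (1 - X^(c*(a+i+1))) := fun i => by rw [hq, ← pow_mul]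
    rw [Finset.prod_congr rfl (fun i _ => hr i)]
    refine EqN_prod_one_sub (fun i hi => ?_)
    have : c * (a+1) ≤ c * (a+i+1) := Nat.mul_le_mul_left c (by omega)
    omega
  have e2 : EqN n (∏ i ∈ range a, (1 - q^((2*M-a)+i+1))) 1 := by
    have hr : ∀ i : ℕ, (1 - q^((2*M-a)+i+1)) = (1 - X^(c*((2*M-a)+i+1))) := fun i => by
      rw [hq, ← pow_mul]
    rw [Finset.prod_congr rfl (fun i _ => hr i)]
    refine EqN_prod_one_sub (fun i hi => ?_)
    have h3 : c * (a+1) ≤ c * ((2*M-a)+i+1) := Nat.mul_le_mul_left c (by omega)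
    omega
  have := EqN.mul e1 e2
  rw [mul_one] at this
  exact this


lemma EqN.sum {n : ℕ} {s : Finset ℤ} {f g : ℤ → Polynomial ℤ}
    (h : ∀ k ∈ s, EqN n (f k) (g k)) :
    EqN n (∑ k ∈ s, f k) (∑ k ∈ s, g k) := by
  intro d hd
  rw [Polynomial.finset_sum_coeff, Polynomial.finset_sum_coeff]
  exact Finset.sum_congr rfl (fun k hk => h k hk d hd)

lemma prod_range_triple (f : ℕ → Polynomial ℤ) :
    ∀ m, ∏ i ∈ range (3*m), f i = ∏ j ∈ range m, (f (3*j) * f (3*j+1) * f (3*j+2))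
  | 0 => by simp
  | m+1 => by
    rw [show 3*(m+1) = (3*m)+1+1+1 from by ring, Finset.prod_range_succ,
      Finset.prod_range_succ, Finset.prod_range_succ, prod_range_triple f m,
      Finset.prod_range_succ]
    ring_nf

lemma prod_range_double (f : ℕ → Polynomial ℤ) :
    ∀ m, ∏ i ∈ range (2*m), f i = ∏ j ∈ range m, (f (2*j) * f (2*j+1))
  | 0 => by simp
  | m+1 => by
    rw [show 2*(m+1) = (2*m)+1+1 from by ring, Finset.prod_range_succ,
      Finset.prod_range_succ, prod_range_double f m, Finset.prod_range_succ]
    ring_nf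

def pentE (k : ℤ) : ℕ :=
  if 0 ≤ k then 3*k.natAbs + 9*(k.natAbs.choose 2) else 6*k.natAbs + 9*(k.natAbs.choose 2)

def octE (k : ℤ) : ℕ :=
  if 0 ≤ k then k.natAbs + 6*(k.natAbs.choose 2) else 5*k.natAbs + 6*(k.natAbs.choose 2)

lemma wtPent (k : ℤ) :
    wt (-(Polynomial.X^3) : Polynomial ℤ) (-(Polynomial.X^6)) k
      = (-1)^(k.natAbs) * Polynomial.X^(pentE k) := by
  set X : Polynomial ℤ := Polynomial.X
  have hAB : (-(X^3)) * (-(X^6)) = X^9 := by ring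
  rcases le_or_gt 0 k with h | h
  · have hn : k.toNat = k.natAbs := by omega
    rw [wt, if_pos h, hAB, pentE, if_pos h, hn, neg_pow, ← pow_mul, ← pow_mul, pow_add]
    ring
  · rw [wt, if_neg (by omega), hAB, pentE, if_neg (by omega), neg_pow, ← pow_mul, ← pow_mul,
      pow_add]
    ring

lemma wtOct (k : ℤ) :
    wt (Polynomial.X : Polynomial ℤ) (Polynomial.X^5) k = Polynomial.X^(octE k) := by
  set X : Polynomial ℤ := Polynomial.X
  have hAB : X * X^5 = X^6 := by ring
  rcases le_or_gt 0 k with h | h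
  · have hn : k.toNat = k.natAbs := by omega
    rw [wt, if_pos h, hAB, octE, if_pos h, hn, ← pow_mul, pow_add]
  · rw [wt, if_neg (by omega), hAB, octE, if_neg (by omega), ← pow_mul, ← pow_mul, pow_add]

lemma twoChoose : ∀ c : ℕ, 2 * c.choose 2 = c * (c-1)
  | 0 => rfl
  | c+1 => by
    have h1 : (c+1).choose 2 = c + c.choose 2 := by
      simp [Nat.choose_succ_succ, Nat.choose_one_right]
    have := twoChoose c
    rcases Nat.eq_zero_or_pos c with rfl | hc
    · simp
    · have h2 : (c+1) * ((c+1)-1) = c*(c-1) + 2*c := by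
        have h3 : c - 1 + 1 = c := by omega
        calc (c+1) * ((c+1)-1) = (c+1) * c := by norm_num
          _ = ((c-1)+1+1) * c := by rw [h3]
          _ = c*(c-1) + 2*c := by ring
      omega


lemma EqN_congr {n : ℕ} {P P' Q Q' : Polynomial ℤ} (h1 : P = P') (h2 : Q = Q')
    (h : EqN n P' Q') : EqN n P Q := h1 ▸ h2 ▸ h

lemma choose2_ge : ∀ c : ℕ, c - 1 ≤ c.choose 2
  | 0 => by simp
  | c+1 => by
    have h1 : (c+1).choose 2 = c + c.choose 2 := by
      simp [Nat.choose_succ_succ, Nat.choose_one_right]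
    omega

lemma pentE_ge (k : ℤ) : 3 * k.natAbs ≤ pentE k := by
  unfold pentE; split <;> omega

lemma octE_ge (k : ℤ) : 3 * k.natAbs ≤ octE k + 3 := by
  have := choose2_ge k.natAbs
  unfold octE; split <;> omega

theorem pentagonal (n M : ℕ) (hM : n + 2 ≤ M) :
    EqN n (∏ i ∈ range (3*M), (1 - (Polynomial.X : Polynomial ℤ)^(3*(i+1))))
      (∑ k ∈ Finset.Icc (-(M:ℤ)) (M:ℤ), (-1)^(k.natAbs) * Polynomial.X^(pentE k)) := by
  have hprod : ∏ i ∈ range (3*M), (1 - (Polynomial.X : Polynomial ℤ)^(3*(i+1)))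
      = (∏ i ∈ range M, ((1 + (-(Polynomial.X^3))*((-(Polynomial.X^3))*(-(Polynomial.X^6)))^i)
          * (1 + (-(Polynomial.X^6))*((-(Polynomial.X^3))*(-(Polynomial.X^6)))^i)))
        * (∏ i ∈ range M, (1 - (Polynomial.X : Polynomial ℤ)^(9*(i+1)))) := by
    rw [prod_range_triple (fun i => 1 - (Polynomial.X : Polynomial ℤ)^(3*(i+1))) M,
      ← Finset.prod_mul_distrib]
    refine Finset.prod_congr rfl (fun j _ => ?_)
    show (1 - (Polynomial.X:Polynomial ℤ)^(3*(3*j+1))) * (1 - (Polynomial.X:Polynomial ℤ)^(3*(3*j+1+1)))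
        * (1 - (Polynomial.X:Polynomial ℤ)^(3*(3*j+2+1))) = _
    ring
  rw [hprod, master (-(Polynomial.X^3) : Polynomial ℤ) (-(Polynomial.X^6)) M, Finset.sum_mul]
  have hq9 : ((-(Polynomial.X^3)) * (-(Polynomial.X^6)) : Polynomial ℤ) = Polynomial.X^9 := by ring
  refine EqN.sum (fun k hk => ?_)
  simp only [Finset.mem_Icc] at hk
  rw [wtPent k, hq9]
  by_cases he : pentE k ≤ n
  · have h3c : 3 * k.natAbs ≤ n := le_trans (pentE_ge k) he
    have hcl := cleanup n 9 M k (by omega) (by omega)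
    have hmul := EqN.mul (EqN.refl n ((-1)^(k.natAbs) * Polynomial.X^(pentE k))) hcl
    rw [mul_one] at hmul
    exact EqN_congr (by ring) rfl hmul
  · have h0 := EqN_X_pow_mul (n := n) (e := pentE k) (by omega)
      ((-1)^(k.natAbs) * (gb ((Polynomial.X:Polynomial ℤ)^9) (2*M) (((M:ℤ)+k).toNat)
        * ∏ i ∈ range M, (1 - (Polynomial.X:Polynomial ℤ)^(9*(i+1))))) ((-1)^(k.natAbs))
    exact EqN_congr (by ring) (by ring) h0

theorem octagonal (n N : ℕ) (hN : n + 2 ≤ N) :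
    EqN n ((∏ i ∈ range (2*N), (1 - (Polynomial.X : Polynomial ℤ)^(6*(i+1))))
        * ∏ i ∈ range N, ((1 + (Polynomial.X:Polynomial ℤ)^(6*i+1)) * (1 + (Polynomial.X:Polynomial ℤ)^(6*i+5))))
      (∑ k ∈ Finset.Icc (-(N:ℤ)) (N:ℤ), Polynomial.X^(octE k)) := by
  have hsplit : (∏ i ∈ range (2*N), (1 - (Polynomial.X : Polynomial ℤ)^(6*(i+1))))
      = (∏ i ∈ range N, (1 - (Polynomial.X:Polynomial ℤ)^(6*(i+1))))
        * (∏ i ∈ range N, (1 - (Polynomial.X:Polynomial ℤ)^(6*(N+i+1)))) := by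
    rw [two_mul, Finset.prod_range_add]
  have hmast : (∏ i ∈ range N, ((1 + (Polynomial.X:Polynomial ℤ)^(6*i+1)) * (1 + (Polynomial.X:Polynomial ℤ)^(6*i+5))))
      = ∏ i ∈ range N, ((1 + (Polynomial.X:Polynomial ℤ)*((Polynomial.X:Polynomial ℤ)*(Polynomial.X:Polynomial ℤ)^5)^i)
          * (1 + ((Polynomial.X:Polynomial ℤ)^5)*((Polynomial.X:Polynomial ℤ)*(Polynomial.X:Polynomial ℤ)^5)^i)) := by
    refine Finset.prod_congr rfl (fun i _ => ?_)
    ring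
  rw [hsplit, hmast, master (Polynomial.X : Polynomial ℤ) (Polynomial.X^5) N]
  have hq6 : ((Polynomial.X:Polynomial ℤ) * (Polynomial.X:Polynomial ℤ)^5) = (Polynomial.X:Polynomial ℤ)^6 := by ring
  rw [hq6, Finset.mul_sum]
  refine EqN.sum (fun k hk => ?_)
  simp only [Finset.mem_Icc] at hk
  rw [wtOct k]
  have hextra : EqN n (∏ i ∈ range N, (1 - (Polynomial.X:Polynomial ℤ)^(6*(N+i+1)))) 1 :=
    EqN_prod_one_sub (fun i _ => by omega)
  by_cases he : octE k ≤ n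
  · have h3c : 3 * k.natAbs ≤ n + 3 := le_trans (octE_ge k) (by omega)
    have hcl := cleanup n 6 N k (by omega) (by omega)
    have hmul := EqN.mul (EqN.mul (EqN.refl n (Polynomial.X^(octE k))) hcl) hextra
    rw [mul_one, mul_one] at hmul
    exact EqN_congr (by ring) rfl hmul
  · have h0 := EqN_X_pow_mul (n := n) (e := octE k) (by omega)
      ((∏ i ∈ range N, (1 - (Polynomial.X:Polynomial ℤ)^(6*(i+1))))
          * (∏ i ∈ range N, (1 - (Polynomial.X:Polynomial ℤ)^(6*(N+i+1))))
          * gb ((Polynomial.X:Polynomial ℤ)^6) (2*N) (((N:ℤ)+k).toNat)) 1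
    rw [mul_one] at h0
    exact EqN_congr (by ring) rfl h0


-- ===== the product T and the bridge to Q2 =====

noncomputable def T (N : ℕ) : Polynomial ℤ :=
  ∏ i ∈ range N, ((1 + (Polynomial.X:Polynomial ℤ)^(6*i+1)) * (1 + (Polynomial.X:Polynomial ℤ)^(6*i+3))
    * (1 + (Polynomial.X:Polynomial ℤ)^(6*i+5)) * (1 + (Polynomial.X:Polynomial ℤ)^(6*i+6)))

def SN (N : ℕ) : Finset ℕ :=
  (range (6*N+1)).filter (fun v => v % 6 ≠ 2 ∧ v % 6 ≠ 4 ∧ v ≠ 0)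

lemma T_eq : ∀ N, T N = ∏ v ∈ SN N, ((Polynomial.X:Polynomial ℤ)^v + 1)
  | 0 => by
    have h0 : SN 0 = ∅ := by
      ext v
      simp only [SN, Finset.mem_filter, mem_range, Finset.notMem_empty, iff_false]
      omega
    rw [T, h0]
    simp
  | N+1 => by
    have hset : SN (N+1) = insert (6*N+1) (insert (6*N+3) (insert (6*N+5)
        (insert (6*N+6) (SN N)))) := by
      ext v
      simp only [SN, Finset.mem_filter, mem_range, Finset.mem_insert]
      omega
    have h1 : (6*N+1) ∉ insert (6*N+3) (insert (6*N+5) (insert (6*N+6) (SN N))) := by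
      simp only [Finset.mem_insert, SN, Finset.mem_filter, mem_range]
      omega
    have h2 : (6*N+3) ∉ insert (6*N+5) (insert (6*N+6) (SN N)) := by
      simp only [Finset.mem_insert, SN, Finset.mem_filter, mem_range]
      omega
    have h3 : (6*N+5) ∉ insert (6*N+6) (SN N) := by
      simp only [Finset.mem_insert, SN, Finset.mem_filter, mem_range]
      omega
    have h4 : (6*N+6) ∉ SN N := by
      simp only [SN, Finset.mem_filter, mem_range]
      omega
    rw [hset, Finset.prod_insert h1, Finset.prod_insert h2, Finset.prod_insert h3,
      Finset.prod_insert h4, ← T_eq N, T, Finset.prod_range_succ, T]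
    ring

lemma T_coeff (N m : ℕ) : (T N).coeff m
    = (((SN N).powerset).filter (fun t => m = t.sum id)).card := by
  rw [T_eq N]
  have hexp : ∏ v ∈ SN N, ((Polynomial.X:Polynomial ℤ)^v + 1)
      = ∑ t ∈ (SN N).powerset, (Polynomial.X:Polynomial ℤ)^(t.sum id) := by
    rw [Finset.prod_add]
    refine Finset.sum_congr rfl (fun t ht => ?_)
    rw [Finset.prod_const_one, mul_one, Finset.prod_pow_eq_pow_sum]
    rfl
  rw [hexp, Polynomial.finset_sum_coeff]
  have : ∀ t ∈ (SN N).powerset, ((Polynomial.X:Polynomial ℤ)^(t.sum id)).coeff m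
      = if m = t.sum id then 1 else 0 := fun t _ => Polynomial.coeff_X_pow _ _
  rw [Finset.sum_congr rfl this, Finset.sum_boole]

lemma finsum_val (t : Finset ℕ) : t.sum id = t.val.sum := by
  show (Multiset.map id t.val).sum = t.val.sum
  rw [Multiset.map_id]

lemma card_eq_Q2 (N m : ℕ) (hm : m ≤ 6*N) :
    (((SN N).powerset).filter (fun t => m = t.sum id)).card = _root_.Q2 m := by
  classical
  rw [_root_.Q2, ← Fintype.card_coe]
  refine Fintype.card_congr ?_
  refine Equiv.mk (fun t => ⟨⟨t.1.val, ?_, ?_⟩, ?_, ?_⟩) (fun P => ⟨P.1.parts.toFinset, ?_⟩)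
    ?_ ?_
  · -- parts_pos
    intro v hv
    have ht := t.2
    simp only [Finset.mem_filter, Finset.mem_powerset] at ht
    have hvS : v ∈ SN N := ht.1 hv
    simp only [SN, Finset.mem_filter, mem_range] at hvS
    omega
  · -- parts_sum
    have ht := t.2
    simp only [Finset.mem_filter, Finset.mem_powerset] at ht
    rw [← finsum_val]
    omega
  · -- nodup
    exact t.1.nodup
  · -- mod condition
    intro v hv
    have ht := t.2
    simp only [Finset.mem_filter, Finset.mem_powerset] at ht
    have hvS : v ∈ SN N := ht.1 hv
    simp only [SN, Finset.mem_filter, mem_range] at hvS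
    exact ⟨hvS.2.1, hvS.2.2.1⟩
  · -- invFun membership
    obtain ⟨P, hnd, hcond⟩ := P
    simp only [Finset.mem_filter, Finset.mem_powerset]
    have hded : P.parts.dedup = P.parts := hnd.dedup
    constructor
    · intro v hv
      rw [Multiset.mem_toFinset] at hv
      have hvpos : 0 < v := P.parts_pos hv
      have hvle : v ≤ m := by
        have h := Multiset.single_le_sum (fun x _ => Nat.zero_le x) v hv
        rw [P.parts_sum] at h
        exact h
      simp only [SN, Finset.mem_filter, mem_range]
      exact ⟨by omega, (hcond v hv).1, (hcond v hv).2, by omega⟩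
    · rw [finsum_val, Multiset.toFinset_val, hded, P.parts_sum]
  · -- left inverse
    intro t
    apply Subtype.ext
    apply Finset.val_injective
    simp only
    rw [Multiset.toFinset_val, Multiset.dedup_eq_self.mpr t.1.nodup]
  · -- right inverse
    intro P
    apply Subtype.ext
    apply Nat.Partition.ext
    simp only
    rw [Multiset.toFinset_val, Multiset.dedup_eq_self.mpr P.2.1]


lemma step1 (N : ℕ) :
    T N * (∏ i ∈ range (2*N), (1 - (Polynomial.X:Polynomial ℤ)^(3*(i+1))))
      = (∏ i ∈ range (2*N), (1 - (Polynomial.X:Polynomial ℤ)^(6*(i+1))))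
        * ∏ i ∈ range N, ((1 + (Polynomial.X:Polynomial ℤ)^(6*i+1)) * (1 + (Polynomial.X:Polynomial ℤ)^(6*i+5))) := by
  rw [T, prod_range_double (fun i => 1 - (Polynomial.X:Polynomial ℤ)^(3*(i+1))) N,
    prod_range_double (fun i => 1 - (Polynomial.X:Polynomial ℤ)^(6*(i+1))) N,
    ← Finset.prod_mul_distrib, ← Finset.prod_mul_distrib]
  refine Finset.prod_congr rfl (fun j _ => ?_)
  ring

lemma twoChooseZ : ∀ c : ℕ, 2 * (c.choose 2 : ℤ) = (c:ℤ) * ((c:ℤ) - 1)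
  | 0 => by simp
  | c+1 => by
    have ih := twoChooseZ c
    have h1 : (c+1).choose 2 = c + c.choose 2 := by
      simp [Nat.choose_succ_succ, Nat.choose_one_right]
    rw [h1]
    push_cast
    linear_combination ih

lemma pentE_intZ (j : ℤ) : 2 * (pentE j : ℤ) = 3*j*(3*j-1) := by
  rcases le_or_gt 0 j with h | h
  · have hc : (j.natAbs : ℤ) = j := by omega
    have tcz := twoChooseZ j.natAbs
    rw [hc] at tcz
    rw [pentE, if_pos h]
    push_cast
    rw [abs_of_nonneg h]
    linear_combination 9 * tcz
  · have hc : (j.natAbs : ℤ) = -j := by omega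
    have tcz := twoChooseZ j.natAbs
    rw [hc] at tcz
    rw [pentE, if_neg (by omega)]
    push_cast
    rw [abs_of_neg h]
    linear_combination 9 * tcz

lemma octE_intZ (k : ℤ) : 2 * (octE k : ℤ) = 2*(k*(3*k-2)) := by
  rcases le_or_gt 0 k with h | h
  · have hc : (k.natAbs : ℤ) = k := by omega
    have tcz := twoChooseZ k.natAbs
    rw [hc] at tcz
    rw [octE, if_pos h]
    push_cast
    rw [abs_of_nonneg h]
    linear_combination 6 * tcz
  · have hc : (k.natAbs : ℤ) = -k := by omega
    have tcz := twoChooseZ k.natAbs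
    rw [hc] at tcz
    rw [octE, if_neg (by omega)]
    push_cast
    rw [abs_of_neg h]
    linear_combination 6 * tcz

lemma pentE_int (j : ℤ) : (pentE j : ℤ) = 3*j*(3*j-1)/2 := by
  have h2 := pentE_intZ j
  rw [← h2, Int.mul_ediv_cancel_left _ (by norm_num)]

lemma octE_int (k : ℤ) : (octE k : ℤ) = k*(3*k-2) :=
  mul_left_cancel₀ (by norm_num : (2:ℤ) ≠ 0) (octE_intZ k)

lemma oct_inj {k k' : ℤ} (h : k*(3*k-2) = k'*(3*k'-2)) : k = k' := by
  have h0 : (k - k') * (3*(k+k') - 2) = 0 := by linear_combination h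
  rcases mul_eq_zero.mp h0 with h1 | h1
  · omega
  · exact absurd h1 (by omega)

lemma octE_ge' (k : ℤ) : k.natAbs ≤ octE k := by
  unfold octE; split <;> omega

end Oct

open scoped Classical in
theorem stmt14 (n : ℕ) :
    ∑ j ∈ Finset.Icc (-(n : ℤ) - 1) ((n : ℤ) + 1),
        (-1) ^ j.natAbs * Q2z ((n : ℤ) - 3 * j * (3 * j - 1) / 2) =
      if ∃ k : ℤ, (n : ℤ) = k * (3 * k - 2) then 1 else 0 := by
  classical
  set N : ℕ := 3*(n+2) with hN
  set M : ℕ := 2*(n+2) with hMdef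
  have h32 : 3*M = 2*N := by omega
  have hoct := Oct.octagonal n N (by omega)
  have hpent := Oct.pentagonal n M (by omega)
  have hpent' : Oct.EqN n (∏ i ∈ range (2*N), (1 - (Polynomial.X:Polynomial ℤ)^(3*(i+1))))
      (∑ k ∈ Finset.Icc (-(M:ℤ)) (M:ℤ), (-1)^(k.natAbs) * Polynomial.X^(Oct.pentE k)) := by
    rw [← h32]; exact hpent
  have key : Oct.EqN n
      (Oct.T N * (∑ k ∈ Finset.Icc (-(M:ℤ)) (M:ℤ), (-1)^(k.natAbs) * Polynomial.X^(Oct.pentE k)))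
      (∑ k ∈ Finset.Icc (-(N:ℤ)) (N:ℤ), Polynomial.X^(Oct.octE k)) := by
    have h1 := Oct.EqN.mul (Oct.EqN.refl n (Oct.T N)) hpent'.symm
    have h2 : Oct.EqN n
        (Oct.T N * (∏ i ∈ range (2*N), (1 - (Polynomial.X:Polynomial ℤ)^(3*(i+1)))))
        (∑ k ∈ Finset.Icc (-(N:ℤ)) (N:ℤ), Polynomial.X^(Oct.octE k)) :=
      Oct.EqN_congr (Oct.step1 N) rfl hoct
    exact h1.trans h2
  have hcoeff := key n (le_refl n)
  -- evaluate LHS coefficient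
  rw [Finset.mul_sum, Polynomial.finset_sum_coeff, Polynomial.finset_sum_coeff] at hcoeff
  have hterm : ∀ k : ℤ, (Oct.T N * ((-1)^(k.natAbs) * Polynomial.X^(Oct.pentE k))).coeff n
      = (-1)^(k.natAbs) * Q2z ((n:ℤ) - 3*k*(3*k-1)/2) := by
    intro k
    have hC : ((-1 : Polynomial ℤ))^(k.natAbs) = Polynomial.C ((-1:ℤ)^(k.natAbs)) := by
      rw [map_pow, map_neg, map_one]
    have h1 : Oct.T N * ((-1)^(k.natAbs) * Polynomial.X^(Oct.pentE k))
        = Polynomial.C ((-1:ℤ)^(k.natAbs)) * (Oct.T N * Polynomial.X^(Oct.pentE k)) := by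
      rw [← hC]; ring
    rw [h1, Polynomial.coeff_C_mul, Polynomial.coeff_mul_X_pow']
    congr 1
    rw [← Oct.pentE_int k, Q2z]
    by_cases hle : Oct.pentE k ≤ n
    · rw [if_pos hle, if_pos (by omega)]
      rw [Oct.T_coeff, Oct.card_eq_Q2 N (n - Oct.pentE k) (by omega)]
      have htn : ((n:ℤ) - (Oct.pentE k:ℤ)).toNat = n - Oct.pentE k := by omega
      rw [htn]
    · rw [if_neg hle, if_neg (by omega)]
  rw [Finset.sum_congr rfl (fun k _ => hterm k)] at hcoeff
  -- convert index set
  have hsub : Finset.Icc (-(n : ℤ) - 1) ((n : ℤ) + 1) ⊆ Finset.Icc (-(M:ℤ)) (M:ℤ) := by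
    intro j hj
    simp only [Finset.mem_Icc] at hj ⊢
    omega
  have hextra : ∀ j ∈ Finset.Icc (-(M:ℤ)) (M:ℤ), j ∉ Finset.Icc (-(n : ℤ) - 1) ((n : ℤ) + 1) →
      (-1)^(j.natAbs) * Q2z ((n:ℤ) - 3*j*(3*j-1)/2) = 0 := by
    intro j hj hnot
    simp only [Finset.mem_Icc] at hj hnot
    have hna : (n:ℕ) + 2 ≤ j.natAbs := by omega
    have hge := Oct.pentE_ge j
    have hpe := Oct.pentE_int j
    rw [← hpe, Q2z, if_neg (by omega), mul_zero]
  rw [← Finset.sum_subset hsub hextra] at hcoeff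
  rw [hcoeff]
  -- evaluate RHS coefficient
  have hXc : ∀ k : ℤ, ((Polynomial.X : Polynomial ℤ)^(Oct.octE k)).coeff n
      = if n = Oct.octE k then (1:ℤ) else 0 := fun k => Polynomial.coeff_X_pow _ _
  rw [Finset.sum_congr rfl (fun k _ => hXc k)]
  by_cases hex : ∃ k : ℤ, (n : ℤ) = k * (3 * k - 2)
  · rw [if_pos hex]
    obtain ⟨k₀, hk₀⟩ := hex
    have hoctk₀ : (n:ℕ) = Oct.octE k₀ := by
      have := Oct.octE_int k₀
      omega
    have hmem : k₀ ∈ Finset.Icc (-(N:ℤ)) (N:ℤ) := by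
      simp only [Finset.mem_Icc]
      have := Oct.octE_ge' k₀
      omega
    rw [Finset.sum_eq_single_of_mem k₀ hmem]
    · rw [if_pos hoctk₀]
    · intro k hk hne
      rw [if_neg]
      intro hcon
      apply hne
      apply Oct.oct_inj (k := k) (k' := k₀)
      have h1 := Oct.octE_int k
      have h2 := Oct.octE_int k₀
      omega
  · rw [if_neg hex]
    refine Finset.sum_eq_zero (fun k hk => ?_)
    rw [if_neg]
    intro hcon
    apply hex
    refine ⟨k, ?_⟩
    have := Oct.octE_int k
    omega
end

section
/- For every nonnegative integer n, Q_2(n) = b_{6,ee}(n) - b_{6,eo}(n), where b_{6,ee}(n) (resp. b_{6,eo}(n)) is the number of 6-regular partitions of n with an even (resp. odd) number of even parts. -/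
open Finset

/-- 6-regular partitions of `n` with an even number of even parts. -/
def b6ee (n : ℕ) : ℕ :=
  Fintype.card {P : Nat.Partition n // (∀ i ∈ P.parts, ¬ (6 ∣ i)) ∧
    Even (Multiset.card (P.parts.filter (fun i => Even i)))}

/-- 6-regular partitions of `n` with an odd number of even parts. -/
def b6eo (n : ℕ) : ℕ :=
  Fintype.card {P : Nat.Partition n // (∀ i ∈ P.parts, ¬ (6 ∣ i)) ∧
    Odd (Multiset.card (P.parts.filter (fun i => Even i)))}

namespace Stmt18Aux

open PowerSeries

noncomputable section

variable {α : Type*}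

open scoped Classical

def partialOddGF (m : ℕ) [Field α] :=
  ∏ i ∈ range m, (1 - (X : PowerSeries α) ^ (2 * i + 1))⁻¹

def partialDistinctGF (m : ℕ) [CommSemiring α] :=
  ∏ i ∈ range m, (1 + (X : PowerSeries α) ^ (i + 1))

/-- A convenience constructor for the power series whose coefficients indicate a subset. -/
def indicatorSeries (α : Type*) [Semiring α] (s : Set ℕ) : PowerSeries α :=
  PowerSeries.mk fun n => if n ∈ s then 1 else 0

theorem coeff_indicator (s : Set ℕ) [Semiring α] (n : ℕ) :
    coeff n (indicatorSeries α s) = if n ∈ s then 1 else 0 :=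
  coeff_mk _ _

theorem two_series (i : ℕ) [Semiring α] :
    1 + (X : PowerSeries α) ^ i.succ = indicatorSeries α {0, i.succ} := by
  ext n
  simp only [coeff_indicator, coeff_one, coeff_X_pow, Set.mem_insert_iff, Set.mem_singleton_iff,
    map_add]
  cases' n with d
  · simp [(Nat.succ_ne_zero i).symm]
  · simp [Nat.succ_ne_zero d]

-- The main workhorse of the partition theorem proof.
theorem partialGF_prop (α : Type*) [CommSemiring α] (n : ℕ) (s : Finset ℕ) (hs : ∀ i ∈ s, 0 < i)
    (c : ℕ → Set ℕ) (hc : ∀ i, i ∉ s → 0 ∈ c i) :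
    #{p : n.Partition | (∀ j, p.parts.count j ∈ c j) ∧ ∀ j ∈ p.parts, j ∈ s} =
      coeff n (∏ i ∈ s, indicatorSeries α ((· * i) '' c i)) := by
  simp_rw [coeff_prod, coeff_indicator, prod_boole, sum_boole]
  apply congr_arg
  simp only [mem_univ, forall_true_left, not_and, not_forall, exists_prop,
    Set.mem_image, not_exists]
  set φ : (a : Nat.Partition n) →
    a ∈ filter (fun p ↦ (∀ (j : ℕ), Multiset.count j p.parts ∈ c j) ∧ ∀ j ∈ p.parts, j ∈ s) univ →
    ℕ →₀ ℕ := fun p _ => {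
      toFun := fun i => Multiset.count i p.parts • i
      support := Finset.filter (fun i => i ≠ 0) p.parts.toFinset
      mem_support_toFun := fun a => by
        simp only [smul_eq_mul, ne_eq, mul_eq_zero, Multiset.count_eq_zero]
        rw [not_or, not_not]
        simp only [Multiset.mem_toFinset, not_not, mem_filter] }
  refine Finset.card_bij φ ?_ ?_ ?_
  · intro a ha
    simp only [φ, not_forall, not_exists, not_and, exists_prop, mem_filter]
    rw [mem_finsuppAntidiag]
    dsimp only [ne_eq, smul_eq_mul, id_eq, eq_mpr_eq_cast, le_eq_subset, Finsupp.coe_mk]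
    simp only [mem_univ, forall_true_left, not_and, not_forall, exists_prop,
      mem_filter, true_and] at ha
    refine ⟨⟨?_, fun i ↦ ?_⟩, fun i _ ↦ ⟨a.parts.count i, ha.1 i, rfl⟩⟩
    · conv_rhs => simp [← a.parts_sum]
      rw [sum_multiset_count_of_subset _ s]
      · simp only [smul_eq_mul]
      · intro i
        simp only [Multiset.mem_toFinset, not_not, mem_filter]
        apply ha.2
    · simp only [ne_eq, Multiset.mem_toFinset, not_not, mem_filter, and_imp]
      exact fun hi _ ↦ ha.2 i hi
  · skip
    intro p₁ hp₁ p₂ hp₂ h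
    apply Nat.Partition.ext
    simp only [true_and, mem_univ, mem_filter] at hp₁ hp₂
    ext i
    simp only [φ, ne_eq, Multiset.mem_toFinset, not_not, smul_eq_mul, Finsupp.mk.injEq] at h
    by_cases hi : i = 0
    · rw [hi]
      rw [Multiset.count_eq_zero_of_notMem]
      · rw [Multiset.count_eq_zero_of_notMem]
        intro a; exact Nat.lt_irrefl 0 (hs 0 (hp₂.2 0 a))
      intro a; exact Nat.lt_irrefl 0 (hs 0 (hp₁.2 0 a))
    · rw [← mul_left_inj' hi]
      rw [funext_iff] at h
      exact h.2 i
  · simp only [φ, mem_filter, mem_finsuppAntidiag, mem_univ, exists_prop, true_and, and_assoc]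
    rintro f ⟨hf, hf₃, hf₄⟩
    have hf' : f ∈ finsuppAntidiag s n := mem_finsuppAntidiag.mpr ⟨hf, hf₃⟩
    simp only [mem_finsuppAntidiag] at hf'
    refine ⟨⟨∑ i ∈ s, Multiset.replicate (f i / i) i, ?_, ?_⟩, ?_, ?_, ?_⟩
    · intro i hi
      simp only [exists_prop, Multiset.mem_sum, mem_map, Function.Embedding.coeFn_mk] at hi
      rcases hi with ⟨t, ht, z⟩
      apply hs
      rwa [Multiset.eq_of_mem_replicate z]
    · simp_rw [Multiset.sum_sum, Multiset.sum_replicate, Nat.nsmul_eq_mul]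
      rw [← hf'.1]
      refine sum_congr rfl fun i hi => Nat.div_mul_cancel ?_
      rcases hf₄ i hi with ⟨w, _, hw₂⟩
      rw [← hw₂]
      exact dvd_mul_left _ _
    · intro i
      simp_rw [Multiset.count_sum', Multiset.count_replicate, sum_ite_eq']
      split_ifs with h
      · rcases hf₄ i h with ⟨w, hw₁, hw₂⟩
        rwa [← hw₂, Nat.mul_div_cancel _ (hs i h)]
      · exact hc _ h
    · intro i hi
      rw [Multiset.mem_sum] at hi
      rcases hi with ⟨j, hj₁, hj₂⟩
      rwa [Multiset.eq_of_mem_replicate hj₂]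
    · ext i
      simp_rw [Multiset.count_sum', Multiset.count_replicate, sum_ite_eq']
      simp only [ne_eq, Multiset.mem_toFinset, not_not, smul_eq_mul, ite_mul,
        zero_mul, Finsupp.coe_mk]
      split_ifs with h
      · apply Nat.div_mul_cancel
        rcases hf₄ i h with ⟨w, _, hw₂⟩
        apply Dvd.intro_left _ hw₂
      · apply symm
        rw [← Finsupp.notMem_support_iff]
        exact notMem_mono hf'.2 h

theorem same_gf [Field α] (m : ℕ) :
    (partialOddGF m * (range m).prod fun i => 1 - (X : PowerSeries α) ^ (m + i + 1)) =
      partialDistinctGF m := by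
  rw [partialOddGF, partialDistinctGF]
  induction' m with m ih
  · simp
  set! π₀ : PowerSeries α := ∏ i ∈ range m, (1 - X ^ (m + 1 + i + 1)) with hπ₀
  set! π₁ : PowerSeries α := ∏ i ∈ range m, (1 - X ^ (2 * i + 1))⁻¹ with hπ₁
  set! π₂ : PowerSeries α := ∏ i ∈ range m, (1 - X ^ (m + i + 1)) with hπ₂
  set! π₃ : PowerSeries α := ∏ i ∈ range m, (1 + X ^ (i + 1)) with hπ₃
  rw [← hπ₃] at ih
  have h : constantCoeff (1 - X ^ (2 * m + 1) : PowerSeries α) ≠ 0 := by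
    rw [RingHom.map_sub, RingHom.map_pow, constantCoeff_one, constantCoeff_X,
      zero_pow (2 * m).succ_ne_zero, sub_zero]
    exact one_ne_zero
  calc
    (∏ i ∈ range (m + 1), (1 - X ^ (2 * i + 1))⁻¹) *
          ∏ i ∈ range (m + 1), (1 - X ^ (m + 1 + i + 1)) =
        π₁ * (1 - X ^ (2 * m + 1))⁻¹ * (π₀ * (1 - X ^ (m + 1 + m + 1))) := by
      rw [prod_range_succ _ m, ← hπ₁, prod_range_succ _ m, ← hπ₀]
    _ = π₁ * (1 - X ^ (2 * m + 1))⁻¹ * (π₀ * ((1 + X ^ (m + 1)) * (1 - X ^ (m + 1)))) := by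
      rw [← sq_sub_sq, one_pow, add_assoc _ m 1, ← two_mul (m + 1), pow_mul']
    _ = π₀ * (1 - X ^ (m + 1)) * (1 - X ^ (2 * m + 1))⁻¹ * (π₁ * (1 + X ^ (m + 1))) := by ring
    _ =
        (∏ i ∈ range (m + 1), (1 - X ^ (m + 1 + i))) * (1 - X ^ (2 * m + 1))⁻¹ *
          (π₁ * (1 + X ^ (m + 1))) := by
      rw [prod_range_succ', add_zero, hπ₀]; simp_rw [← add_assoc]
    _ = π₂ * (1 - X ^ (m + 1 + m)) * (1 - X ^ (2 * m + 1))⁻¹ * (π₁ * (1 + X ^ (m + 1))) := by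
      rw [add_right_comm, hπ₂, ← prod_range_succ]; simp_rw [add_right_comm]
    _ = π₂ * (1 - X ^ (2 * m + 1)) * (1 - X ^ (2 * m + 1))⁻¹ * (π₁ * (1 + X ^ (m + 1))) := by
      rw [two_mul, add_right_comm _ m 1]
    _ = (1 - X ^ (2 * m + 1)) * (1 - X ^ (2 * m + 1))⁻¹ * π₂ * (π₁ * (1 + X ^ (m + 1))) := by ring
    _ = π₂ * (π₁ * (1 + X ^ (m + 1))) := by rw [PowerSeries.mul_inv_cancel _ h, one_mul]
    _ = π₁ * π₂ * (1 + X ^ (m + 1)) := by ring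
    _ = π₃ * (1 + X ^ (m + 1)) := by rw [ih]
    _ = _ := by rw [prod_range_succ]


theorem w_series (j : ℕ) (hj : 0 < j) (w : ℚ) :
    (1 - C w * (X : PowerSeries ℚ) ^ j)⁻¹ =
      PowerSeries.mk fun k => if j ∣ k then w ^ (k / j) else 0 := by
  have hc : constantCoeff (1 - C w * X ^ j) ≠ 0 := by
    simp [zero_pow hj.ne']
  rw [PowerSeries.inv_eq_iff_mul_eq_one hc]
  ext n
  have hrw : (PowerSeries.mk fun k => if j ∣ k then w ^ (k / j) else 0) *
      (1 - C w * X ^ j) =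
      (PowerSeries.mk fun k => if j ∣ k then w ^ (k / j) else 0) -
      C w * ((PowerSeries.mk fun k => if j ∣ k then w ^ (k / j) else 0) * X ^ j) := by
    ring
  rw [hrw, map_sub, coeff_C_mul, PowerSeries.coeff_mul_X_pow', coeff_mk]
  rcases Nat.eq_zero_or_pos n with rfl | hn
  · simp [Nat.le_zero, hj.ne']
  · rw [coeff_one, if_neg hn.ne']
    by_cases hd : j ∣ n
    · have hjn : j ≤ n := Nat.le_of_dvd hn hd
      rw [if_pos hd, if_pos hjn, coeff_mk, if_pos ((Nat.dvd_sub hd dvd_rfl))]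
      have h1 : 1 ≤ n / j := Nat.one_le_div_iff hj |>.2 hjn
      have : (n - j) / j = n / j - 1 := by
        obtain ⟨c, rfl⟩ := hd
        rcases c with _ | c
        · omega
        · rw [Nat.mul_succ, Nat.add_sub_cancel, Nat.mul_div_cancel_left _ hj,
            Nat.mul_add_div hj, Nat.div_self hj]
          omega
      rw [this]
      have : w ^ (n / j) = w * w ^ (n / j - 1) := by
        rw [← pow_succ']
        congr 1
        omega
      rw [this]; ring
    · rw [if_neg hd]
      split_ifs with hjn
      · rw [coeff_mk, if_neg (fun hdd => hd (by
          obtain ⟨c, hc2⟩ := hdd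
          exact ⟨c + 1, by rw [Nat.mul_succ]; omega⟩))]
        ring
      · ring

theorem weightedGF_prop (n : ℕ) (s : Finset ℕ) (hs : ∀ i ∈ s, 0 < i) (w : ℕ → ℚ) :
    ∑ p ∈ Finset.univ.filter (fun p : n.Partition => ∀ j ∈ p.parts, j ∈ s),
        ∏ i ∈ s, w i ^ p.parts.count i =
      coeff n (∏ i ∈ s, PowerSeries.mk fun k => if i ∣ k then w i ^ (k / i) else 0) := by
  rw [coeff_prod]
  simp_rw [coeff_mk]
  have hrhs : ∑ ℓ ∈ finsuppAntidiag s n, ∏ i ∈ s, (if i ∣ ℓ i then w i ^ (ℓ i / i) else 0)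
      = ∑ ℓ ∈ (finsuppAntidiag s n).filter (fun ℓ => ∀ i ∈ s, i ∣ ℓ i),
          ∏ i ∈ s, w i ^ (ℓ i / i) := by
    rw [sum_filter]
    refine sum_congr rfl fun ℓ _ => ?_
    split_ifs with h
    · exact prod_congr rfl fun i hi => if_pos (h i hi)
    · push_neg at h
      obtain ⟨i, hi, hdvd⟩ := h
      refine prod_eq_zero hi ?_
      exact if_neg hdvd
  rw [hrhs]
  set φ : (a : Nat.Partition n) →
    a ∈ Finset.univ.filter (fun p : n.Partition => ∀ j ∈ p.parts, j ∈ s) → (ℕ →₀ ℕ) :=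
    fun p _ => {
      toFun := fun i => Multiset.count i p.parts • i
      support := Finset.filter (fun i => i ≠ 0) p.parts.toFinset
      mem_support_toFun := fun a => by
        simp only [smul_eq_mul, ne_eq, mul_eq_zero, Multiset.count_eq_zero]
        rw [not_or, not_not]
        simp only [Multiset.mem_toFinset, not_not, mem_filter] }
  refine Finset.sum_bij φ ?_ ?_ ?_ ?_
  · intro a ha
    simp only [φ, mem_filter]
    rw [mem_finsuppAntidiag]
    dsimp only [ne_eq, smul_eq_mul, Finsupp.coe_mk]
    simp only [mem_univ, true_and, mem_filter] at ha
    refine ⟨⟨?_, fun i ↦ ?_⟩, fun i _ ↦ Dvd.intro_left _ rfl⟩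
    · conv_rhs => simp [← a.parts_sum]
      rw [sum_multiset_count_of_subset _ s]
      · simp only [smul_eq_mul]
      · intro i
        simp only [Multiset.mem_toFinset, not_not, mem_filter]
        apply ha
    · simp only [ne_eq, Multiset.mem_toFinset, not_not, mem_filter, and_imp]
      exact fun hi _ ↦ ha i hi
  · skip
    intro p₁ hp₁ p₂ hp₂ h
    apply Nat.Partition.ext
    simp only [mem_univ, true_and, mem_filter] at hp₁ hp₂
    ext i
    simp only [φ, ne_eq, Multiset.mem_toFinset, not_not, smul_eq_mul, Finsupp.mk.injEq] at h
    by_cases hi : i = 0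
    · rw [hi]
      rw [Multiset.count_eq_zero_of_notMem]
      · rw [Multiset.count_eq_zero_of_notMem]
        intro a; exact Nat.lt_irrefl 0 (hs 0 (hp₂ 0 a))
      intro a; exact Nat.lt_irrefl 0 (hs 0 (hp₁ 0 a))
    · rw [← mul_left_inj' hi]
      rw [funext_iff] at h
      exact h.2 i
  · simp only [φ, mem_filter, mem_finsuppAntidiag, mem_univ, exists_prop, true_and, and_assoc]
    rintro f ⟨hf, hf₃, hf₄⟩
    refine ⟨⟨∑ i ∈ s, Multiset.replicate (f i / i) i, ?_, ?_⟩, ?_, ?_⟩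
    · intro i hi
      simp only [exists_prop, Multiset.mem_sum, mem_map, Function.Embedding.coeFn_mk] at hi
      rcases hi with ⟨t, ht, z⟩
      apply hs
      rwa [Multiset.eq_of_mem_replicate z]
    · simp_rw [Multiset.sum_sum, Multiset.sum_replicate, Nat.nsmul_eq_mul]
      rw [← hf]
      exact sum_congr rfl fun i hi => Nat.div_mul_cancel (hf₄ i hi)
    · intro i hi
      rw [Multiset.mem_sum] at hi
      rcases hi with ⟨j, hj₁, hj₂⟩
      rwa [Multiset.eq_of_mem_replicate hj₂]
    · ext i
      simp_rw [Multiset.count_sum', Multiset.count_replicate, sum_ite_eq']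
      simp only [ne_eq, Multiset.mem_toFinset, not_not, smul_eq_mul, ite_mul,
        zero_mul, Finsupp.coe_mk]
      split_ifs with h
      · exact Nat.div_mul_cancel (hf₄ i h)
      · apply symm
        rw [← Finsupp.notMem_support_iff]
        exact notMem_mono hf₃ h
  · intro a ha
    refine prod_congr rfl fun i hi => ?_
    simp only [φ, Finsupp.coe_mk, smul_eq_mul]
    rw [Nat.mul_div_cancel _ (hs i hi)]

def w6 (i : ℕ) : ℚ := if Even i then -1 else 1

def S6 (N : ℕ) : Finset ℕ := (Icc 1 N).filter fun i => ¬ 6 ∣ i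
def T6 (N : ℕ) : Finset ℕ := (Icc 1 N).filter fun i => i % 6 ≠ 2 ∧ i % 6 ≠ 4

def Gser (N : ℕ) : PowerSeries ℚ := ∏ i ∈ S6 N, (1 - C (w6 i) * X ^ i)⁻¹
def Dser (N : ℕ) : PowerSeries ℚ := ∏ i ∈ S6 N, (1 - C (w6 i) * X ^ i)
def Hser (N : ℕ) : PowerSeries ℚ := ∏ i ∈ T6 N, (1 + X ^ i)

lemma S6_pos {N i : ℕ} (hi : i ∈ S6 N) : 0 < i := by
  simp only [S6, mem_filter, mem_Icc] at hi; omega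

lemma T6_pos {N i : ℕ} (hi : i ∈ T6 N) : 0 < i := by
  simp only [T6, mem_filter, mem_Icc] at hi; omega

lemma hGD (N : ℕ) : Gser N * Dser N = 1 := by
  rw [Gser, Dser, ← prod_mul_distrib]
  apply prod_eq_one
  intro i hi
  apply PowerSeries.inv_mul_cancel
  simp [zero_pow (S6_pos hi).ne']

lemma evenS_eq (N : ℕ) :
    (S6 N).filter (fun i => Even i) =
      (Icc 1 N).filter fun i => ¬ (i % 6 ≠ 2 ∧ i % 6 ≠ 4) := by
  rw [S6, filter_filter]
  apply filter_congr
  intro i _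
  simp only [Nat.even_iff]
  omega

lemma oddS_eq (m : ℕ) :
    (S6 (2 * m)).filter (fun i => ¬ Even i) = (range m).image (fun k => 2 * k + 1) := by
  rw [S6, filter_filter]
  ext j
  simp only [mem_filter, mem_Icc, mem_image, mem_range, Nat.even_iff]
  constructor
  · rintro ⟨⟨h1, h2⟩, h3, h4⟩
    exact ⟨j / 2, by omega, by omega⟩
  · rintro ⟨k, hk, rfl⟩
    refine ⟨⟨by omega, by omega⟩, by omega, by omega⟩

lemma Dser_eq (m : ℕ) :
    Dser (2 * m) =
      (((S6 (2 * m)).filter (fun i => Even i)).prod (fun i => 1 + (X : PowerSeries ℚ) ^ i)) *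
        ∏ k ∈ range m, (1 - (X : PowerSeries ℚ) ^ (2 * k + 1)) := by
  rw [Dser, ← prod_filter_mul_prod_filter_not (S6 (2 * m)) (fun i => Even i)]
  congr 1
  · apply prod_congr rfl
    intro i hi
    have hw : w6 i = -1 := by simp [w6, (mem_filter.mp hi).2]
    rw [hw, map_neg, map_one]
    ring
  · rw [oddS_eq, prod_image (fun a _ b _ h => by omega)]
    apply prod_congr rfl
    intro k _
    have he : ¬ Even (2 * k + 1) := by simp [Nat.even_iff]
    have hw : w6 (2 * k + 1) = 1 := by simp [w6, he]
    rw [hw, map_one, one_mul]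

lemma HE (N : ℕ) :
    Hser N * (((S6 N).filter (fun i => Even i)).prod (fun i => 1 + (X : PowerSeries ℚ) ^ i)) =
      ∏ i ∈ Icc 1 N, (1 + (X : PowerSeries ℚ) ^ i) := by
  rw [Hser, T6, evenS_eq]
  exact prod_filter_mul_prod_filter_not _ _ _

lemma Icc_prod_eq (N : ℕ) :
    (∏ i ∈ Icc 1 N, (1 + (X : PowerSeries ℚ) ^ i)) = partialDistinctGF N := by
  rw [partialDistinctGF]
  rw [show Icc 1 N = (range N).image (fun i => i + 1) by
    ext j
    simp only [mem_Icc, mem_image, mem_range]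
    constructor
    · rintro ⟨h1, h2⟩; exact ⟨j - 1, by omega, by omega⟩
    · rintro ⟨k, hk, rfl⟩; omega]
  rw [prod_image (fun a _ b _ h => by omega)]

lemma odd_cancel (M : ℕ) :
    (partialOddGF M : PowerSeries ℚ) * ∏ k ∈ range M, (1 - X ^ (2 * k + 1)) = 1 := by
  rw [partialOddGF, ← prod_mul_distrib]
  apply prod_eq_one
  intro k _
  apply PowerSeries.inv_mul_cancel
  simp [zero_pow]

theorem key_gf (m : ℕ) :
    Gser (2 * m) * ∏ i ∈ range (2 * m), (1 - (X : PowerSeries ℚ) ^ (2 * m + i + 1)) =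
      Hser (2 * m) * ∏ k ∈ Ico m (2 * m), (1 - (X : PowerSeries ℚ) ^ (2 * k + 1)) := by
  have hQ : (∏ i ∈ range (2 * m), (1 - (X : PowerSeries ℚ) ^ (2 * m + i + 1)))
      = partialDistinctGF (2 * m) * ∏ k ∈ range (2 * m), (1 - X ^ (2 * k + 1)) := by
    calc
      (∏ i ∈ range (2 * m), (1 - (X : PowerSeries ℚ) ^ (2 * m + i + 1)))
          = (partialOddGF (2 * m) * ∏ k ∈ range (2 * m), (1 - X ^ (2 * k + 1))) *
            ∏ i ∈ range (2 * m), (1 - (X : PowerSeries ℚ) ^ (2 * m + i + 1)) := by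
        rw [odd_cancel, one_mul]
      _ = (partialOddGF (2 * m) * ∏ i ∈ range (2 * m), (1 - X ^ (2 * m + i + 1))) *
            ∏ k ∈ range (2 * m), (1 - X ^ (2 * k + 1)) := by ring
      _ = partialDistinctGF (2 * m) * ∏ k ∈ range (2 * m), (1 - X ^ (2 * k + 1)) := by
        rw [same_gf]
  have hsplit : (∏ k ∈ range (2 * m), (1 - (X : PowerSeries ℚ) ^ (2 * k + 1)))
      = (∏ k ∈ range m, (1 - (X : PowerSeries ℚ) ^ (2 * k + 1))) *
        ∏ k ∈ Ico m (2 * m), (1 - (X : PowerSeries ℚ) ^ (2 * k + 1)) := by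
    simp only [range_eq_Ico]
    exact (prod_Ico_consecutive _ (Nat.zero_le m) (by omega : m ≤ 2 * m)).symm
  rw [hQ, ← Icc_prod_eq, ← HE, hsplit]
  have : Hser (2 * m) *
        (((S6 (2 * m)).filter (fun i => Even i)).prod (fun i => 1 + (X : PowerSeries ℚ) ^ i)) *
        ((∏ k ∈ range m, (1 - (X : PowerSeries ℚ) ^ (2 * k + 1))) *
          ∏ k ∈ Ico m (2 * m), (1 - (X : PowerSeries ℚ) ^ (2 * k + 1)))
      = ((((S6 (2 * m)).filter (fun i => Even i)).prod (fun i => 1 + (X : PowerSeries ℚ) ^ i)) *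
          ∏ k ∈ range m, (1 - (X : PowerSeries ℚ) ^ (2 * k + 1))) *
        (Hser (2 * m) * ∏ k ∈ Ico m (2 * m), (1 - (X : PowerSeries ℚ) ^ (2 * k + 1))) := by
    ring
  rw [this, ← Dser_eq, ← mul_assoc, hGD, one_mul]

lemma weight_eval (s : Finset ℕ) (p : Multiset ℕ) (hp : ∀ j ∈ p, j ∈ s) :
    ∏ i ∈ s, w6 i ^ p.count i =
      (-1 : ℚ) ^ Multiset.card (p.filter (fun i => Even i)) := by
  rw [← prod_filter_mul_prod_filter_not s (fun i => Even i)]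
  have h2 : ∏ i ∈ s.filter (fun i => ¬ Even i), w6 i ^ p.count i = 1 :=
    prod_eq_one fun i hi => by
      rw [show w6 i = 1 from if_neg (mem_filter.mp hi).2, one_pow]
  rw [h2, mul_one]
  have h1 : ∏ i ∈ s.filter (fun i => Even i), w6 i ^ p.count i
      = ∏ i ∈ s.filter (fun i => Even i), (-1 : ℚ) ^ p.count i :=
    prod_congr rfl fun i hi => by
      rw [show w6 i = -1 from if_pos (mem_filter.mp hi).2]
  rw [h1, prod_pow_eq_pow_sum]
  congr 1
  have h3 : ∑ i ∈ s.filter (fun i => Even i), p.count i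
      = ∑ i ∈ s.filter (fun i => Even i), (p.filter (fun j => Even j)).count i :=
    sum_congr rfl fun i hi => by
      rw [Multiset.count_filter, if_pos (mem_filter.mp hi).2]
  rw [h3]
  rw [← Finset.sum_subset
    (show (p.filter (fun j => Even j)).toFinset ⊆ s.filter (fun i => Even i) by
      intro j hj
      rw [Multiset.mem_toFinset, Multiset.mem_filter] at hj
      exact mem_filter.mpr ⟨hp j hj.1, hj.2⟩)
    (fun x _ hx => by
      rwa [Multiset.count_eq_zero, ← Multiset.mem_toFinset])]
  exact Multiset.toFinset_sum_count_eq _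

theorem Gser_coeff (n N : ℕ) (hN : n < N) :
    coeff n (Gser N) = (b6ee n : ℚ) - (b6eo n : ℚ) := by
  have hpos : ∀ i ∈ S6 N, 0 < i := fun i hi => S6_pos hi
  have h1 : Gser N = ∏ i ∈ S6 N, PowerSeries.mk fun k => if i ∣ k then w6 i ^ (k / i) else 0 := by
    rw [Gser]
    exact prod_congr rfl fun i hi => w_series i (hpos i hi) (w6 i)
  rw [h1, ← weightedGF_prop n (S6 N) hpos w6]
  have hset : Finset.univ.filter (fun p : n.Partition => ∀ j ∈ p.parts, j ∈ S6 N)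
      = Finset.univ.filter (fun p : n.Partition => ∀ j ∈ p.parts, ¬ 6 ∣ j) := by
    apply filter_congr
    intro p _
    constructor
    · intro h j hj
      exact (mem_filter.mp (h j hj)).2
    · intro h j hj
      have hj1 := p.parts_pos hj
      have hjn : j ≤ n := by
        simpa [p.parts_sum] using Multiset.single_le_sum (fun _ _ => Nat.zero_le _) _ hj
      exact mem_filter.mpr ⟨mem_Icc.mpr ⟨hj1, by omega⟩, h j hj⟩
  have hw : ∀ p ∈ Finset.univ.filter (fun p : n.Partition => ∀ j ∈ p.parts, j ∈ S6 N),
      ∏ i ∈ S6 N, w6 i ^ p.parts.count i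
        = (-1 : ℚ) ^ Multiset.card (p.parts.filter (fun i => Even i)) := fun p hp =>
    weight_eval _ _ (mem_filter.mp hp).2
  rw [sum_congr rfl hw, hset]
  set B := Finset.univ.filter (fun p : n.Partition => ∀ j ∈ p.parts, ¬ 6 ∣ j) with hB
  set e : n.Partition → ℕ := fun p => Multiset.card (p.parts.filter (fun i => Even i)) with he
  rw [← sum_filter_add_sum_filter_not B (fun p => Even (e p))]
  have hA : ∑ p ∈ B.filter (fun p => Even (e p)), (-1 : ℚ) ^ e p
      = #(B.filter (fun p => Even (e p))) := by
    rw [sum_congr rfl (fun p hp => Even.neg_one_pow (mem_filter.mp hp).2), sum_const,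
      nsmul_eq_mul, mul_one]
  have hO : ∑ p ∈ B.filter (fun p => ¬ Even (e p)), (-1 : ℚ) ^ e p
      = -#(B.filter (fun p => ¬ Even (e p))) := by
    rw [sum_congr rfl (fun p hp =>
      Odd.neg_one_pow (Nat.not_even_iff_odd.mp (mem_filter.mp hp).2)), sum_const,
      nsmul_eq_mul, mul_neg_one]
  rw [hA, hO]
  have hee : b6ee n = #(B.filter (fun p => Even (e p))) := by
    rw [b6ee]
    refine Fintype.card_of_subtype _ fun p => ?_
    rw [mem_filter, hB, mem_filter]
    exact ⟨fun h => ⟨h.1.2, h.2⟩, fun h => ⟨⟨mem_univ _, h.1⟩, h.2⟩⟩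
  have heo : b6eo n = #(B.filter (fun p => ¬ Even (e p))) := by
    rw [b6eo]
    refine Fintype.card_of_subtype _ fun p => ?_
    rw [mem_filter, hB, mem_filter, ← Nat.not_even_iff_odd]
    exact ⟨fun h => ⟨h.1.2, h.2⟩, fun h => ⟨⟨mem_univ _, h.1⟩, h.2⟩⟩
  rw [hee, heo]
  ring

theorem Hser_coeff (n N : ℕ) (hN : n < N) :
    ((Q2 n : ℚ)) = coeff n (Hser N) := by
  have hpos : ∀ i ∈ T6 N, 0 < i := fun i hi => T6_pos hi
  have hgf := partialGF_prop ℚ n (T6 N) hpos (fun _ => {0, 1}) (fun _ _ => Or.inl rfl)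
  have hser : (∏ i ∈ T6 N, indicatorSeries ℚ ((· * i) '' {0, 1})) = Hser N := by
    rw [Hser]
    refine prod_congr rfl fun i hi => ?_
    obtain ⟨k, rfl⟩ : ∃ k, i = k + 1 := ⟨i - 1, by have := T6_pos hi; omega⟩
    rw [show ((1 : PowerSeries ℚ) + X ^ (k + 1)) = 1 + X ^ (k).succ from rfl, two_series]
    congr 1
    simp [Set.image_pair]
  rw [hser] at hgf
  rw [← hgf]
  have hQ : Q2 n = #(Finset.univ.filter
      (fun p : n.Partition =>
        (∀ j, p.parts.count j ∈ (fun _ => ({0, 1} : Set ℕ)) j) ∧ ∀ j ∈ p.parts, j ∈ T6 N)) := by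
    rw [Q2]
    refine Fintype.card_of_subtype _ fun p => ?_
    rw [mem_filter]
    constructor
    · rintro ⟨-, hcount, hmem⟩
      constructor
      · rw [Multiset.nodup_iff_count_le_one]
        intro j
        have := hcount j
        simp only [Set.mem_insert_iff, Set.mem_singleton_iff] at this
        omega
      · intro i hi
        have := hmem i hi
        simp only [T6, mem_filter, mem_Icc] at this
        exact this.2
    · rintro ⟨hnodup, hmod⟩
      refine ⟨mem_univ _, fun j => ?_, fun j hj => ?_⟩
      · have := Multiset.nodup_iff_count_le_one.mp hnodup j
        simp only [Set.mem_insert_iff, Set.mem_singleton_iff]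
        omega
      · have hj1 := p.parts_pos hj
        have hjn : j ≤ n := by
          simpa [p.parts_sum] using Multiset.single_le_sum (fun _ _ => Nat.zero_le _) _ hj
        exact mem_filter.mpr ⟨mem_Icc.mpr ⟨hj1, by omega⟩, hmod j hj⟩
  rw [hQ]


end

end Stmt18Aux

theorem stmt18 (n : ℕ) :
    (Q2 n : ℤ) = (b6ee n : ℤ) - (b6eo n : ℤ) := by
  have key : (Q2 n : ℚ) = (b6ee n : ℚ) - (b6eo n : ℚ) := by
    have hN : n < 2 * (n + 1) := by omega
    have h1 := Stmt18Aux.key_gf (n + 1)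
    have h2 : PowerSeries.coeff n (Stmt18Aux.Gser (2 * (n + 1)) *
        ∏ i ∈ Finset.range (2 * (n + 1)),
          (1 - (PowerSeries.X : PowerSeries ℚ) ^ (2 * (n + 1) + i + 1)))
        = PowerSeries.coeff n (Stmt18Aux.Gser (2 * (n + 1))) := by
      apply PowerSeries.coeff_mul_prod_one_sub_of_lt_order
      intro i _
      rw [PowerSeries.order_X_pow]
      exact_mod_cast (by omega : n < 2 * (n + 1) + i + 1)
    have h3 : PowerSeries.coeff n (Stmt18Aux.Hser (2 * (n + 1)) *
        ∏ k ∈ Finset.Ico (n + 1) (2 * (n + 1)),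
          (1 - (PowerSeries.X : PowerSeries ℚ) ^ (2 * k + 1)))
        = PowerSeries.coeff n (Stmt18Aux.Hser (2 * (n + 1))) := by
      apply PowerSeries.coeff_mul_prod_one_sub_of_lt_order
      intro k hk
      rw [PowerSeries.order_X_pow]
      rw [Finset.mem_Ico] at hk
      exact_mod_cast (by omega : n < 2 * k + 1)
    rw [Stmt18Aux.Hser_coeff n (2 * (n + 1)) hN, ← Stmt18Aux.Gser_coeff n (2 * (n + 1)) hN,
      ← h2, ← h3, h1]
  exact_mod_cast key
end

section
/- For every nonnegative integer n, p(n) - p(n-6) - p(n-12) + p(n-30) ≤ b_6(n) ≤ p(n) - p(n-6), where p(x) = 0 for x negative. -/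
open Finset

/-- Euler's partition function. -/
def pnat (n : ℕ) : ℕ := Fintype.card (Nat.Partition n)

/-- `p` extended to integers, `0` on negatives. -/
def pz (x : ℤ) : ℤ := if 0 ≤ x then pnat x.toNat else 0

/-- Number of 6-regular partitions of `n` (no part divisible by 6). -/
def b6 (n : ℕ) : ℕ := Fintype.card {P : Nat.Partition n // ∀ i ∈ P.parts, ¬ (6 ∣ i)}

open Multiset

lemma mem_le_sum {s : Multiset ℕ} {a : ℕ} (h : a ∈ s) : a ≤ s.sum := by
  have h1 := Multiset.cons_erase h
  have h2 : (a ::ₘ s.erase a).sum = a + (s.erase a).sum := Multiset.sum_cons a _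
  rw [h1] at h2; omega

lemma sum_erase' {s : Multiset ℕ} {a : ℕ} (h : a ∈ s) : (s.erase a).sum = s.sum - a := by
  have h1 := Multiset.cons_erase h
  have h2 : (a ::ₘ s.erase a).sum = a + (s.erase a).sum := Multiset.sum_cons a _
  rw [h1] at h2; omega

/-- default partition of m (all ones) -/
def ones (m : ℕ) : Nat.Partition m where
  parts := Multiset.replicate m 1
  parts_pos := fun h => by rw [Multiset.eq_of_mem_replicate h]; norm_num
  parts_sum := by simp

/-- build a partition from a multiset, if valid; else junk -/
def toPart (m : ℕ) (s : Multiset ℕ) : Nat.Partition m :=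
  if h : s.sum = m ∧ ∀ i ∈ s, 0 < i then ⟨s, fun hi => h.2 _ hi, h.1⟩ else ones m

lemma toPart_parts {m : ℕ} {s : Multiset ℕ} (h1 : s.sum = m) (h2 : ∀ i ∈ s, 0 < i) :
    (toPart m s).parts = s := by
  rw [toPart, dif_pos ⟨h1, h2⟩]

lemma toPart_eq {m : ℕ} {s : Multiset ℕ} (P : Nat.Partition m) (h : s = P.parts) :
    toPart m s = P := by
  subst h
  exact Nat.Partition.ext (toPart_parts P.parts_sum (fun i hi => P.parts_pos hi))

/-- encoding of x as multiset of 12s and at most one 18 -/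
def code (x : ℕ) : Multiset ℕ :=
  if x % 12 = 0 then Multiset.replicate (x / 12) 12
  else 18 ::ₘ Multiset.replicate ((x - 18) / 12) 12

lemma mem_code {x i : ℕ} (hi : i ∈ code x) : i = 12 ∨ i = 18 := by
  rw [code] at hi
  split_ifs at hi with h
  · exact Or.inl (Multiset.eq_of_mem_replicate hi)
  · rcases Multiset.mem_cons.1 hi with h' | h'
    · exact Or.inr h'
    · exact Or.inl (Multiset.eq_of_mem_replicate h')

lemma sum_code {x : ℕ} (h6 : 6 ∣ x) (h12 : 12 ≤ x) : (code x).sum = x := by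
  rw [code]
  split_ifs with h
  · rw [Multiset.sum_replicate]; simp only [smul_eq_mul]; omega
  · rw [Multiset.sum_cons, Multiset.sum_replicate]; simp only [smul_eq_mul]; omega

lemma count12_code {x : ℕ} (h6 : 6 ∣ x) (h12 : 12 ≤ x) :
    12 * (code x).count 12 + 18 * (code x).count 18 = x := by
  rw [code]
  split_ifs with h
  · rw [Multiset.count_replicate, Multiset.count_replicate]
    norm_num
    omega
  · rw [Multiset.count_cons_of_ne (by norm_num), Multiset.count_cons_self,
      Multiset.count_replicate, Multiset.count_replicate]
    norm_num
    omega

lemma code_has {x : ℕ} (h6 : 6 ∣ x) (h12 : 12 ≤ x) : 12 ∈ code x ∨ 18 ∈ code x := by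
  rw [code]
  split_ifs with h
  · left; rw [Multiset.mem_replicate]; omega
  · right; exact Multiset.mem_cons_self _ _

lemma count6_code (x : ℕ) : (code x).count 6 = 0 := by
  rw [Multiset.count_eq_zero]
  intro h
  rcases mem_code h with h' | h' <;> norm_num at h'

lemma code_pos {x i : ℕ} (hi : i ∈ code x) : 0 < i := by
  rcases mem_code hi with h | h <;> omega

abbrev B6T (n : ℕ) := {P : Nat.Partition n // ∀ i ∈ P.parts, ¬ (6 ∣ i)}

lemma exMul {n : ℕ} (lam : Nat.Partition n) (h : ¬ ∀ i ∈ lam.parts, ¬ (6 ∣ i)) :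
    ∃ k, k ∈ lam.parts ∧ 6 ∣ k := by
  push_neg at h
  obtain ⟨i, hi, hd⟩ := h
  exact ⟨i, hi, hd⟩

/-- main encoding map -/
def encode (n : ℕ) (lam : Nat.Partition n) :
    B6T n ⊕ (Nat.Partition (n - 6) ⊕ Nat.Partition (n - 12)) :=
  if hreg : ∀ i ∈ lam.parts, ¬ (6 ∣ i) then Sum.inl ⟨lam, hreg⟩
  else if _h6 : 6 ∈ lam.parts then Sum.inr (Sum.inl (toPart (n - 6) (lam.parts.erase 6)))
  else if _h12 : 12 ∈ lam.parts then Sum.inr (Sum.inr (toPart (n - 12) (lam.parts.erase 12)))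
  else if _h18 : 18 ∈ lam.parts then
    Sum.inr (Sum.inr (toPart (n - 12) (6 ::ₘ lam.parts.erase 18)))
  else if _h24 : 24 ∈ lam.parts then
    Sum.inr (Sum.inr (toPart (n - 12) (6 ::ₘ 6 ::ₘ lam.parts.erase 24)))
  else if _h30 : 30 ∈ lam.parts then
    Sum.inr (Sum.inr (toPart (n - 12) (6 ::ₘ 12 ::ₘ lam.parts.erase 30)))
  else
    Sum.inr (Sum.inr (toPart (n - 12)
      (6 ::ₘ 6 ::ₘ (code (Nat.find (exMul lam hreg) - 24) +
        lam.parts.erase (Nat.find (exMul lam hreg))))))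

/-- decoding on the `n-12` component -/
def decode30 (n : ℕ) (mu : Nat.Partition (n - 12)) :
    Nat.Partition n ⊕ Nat.Partition (n - 30) :=
  if mu.parts.count 6 = 0 then Sum.inl (toPart n (12 ::ₘ mu.parts))
  else if mu.parts.count 6 = 1 then
    if 12 ∈ mu.parts then Sum.inl (toPart n (30 ::ₘ ((mu.parts.erase 6).erase 12)))
    else Sum.inl (toPart n (18 ::ₘ mu.parts.erase 6))
  else if mu.parts.count 6 = 2 then
    if 12 ∈ mu.parts ∨ 18 ∈ mu.parts then
      Sum.inl (toPart n ((24 + 12 * mu.parts.count 12 + 18 * mu.parts.count 18) ::ₘ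
        mu.parts.filter (fun i => ¬ (i = 6 ∨ i = 12 ∨ i = 18))))
    else Sum.inl (toPart n (24 ::ₘ ((mu.parts.erase 6).erase 6)))
  else Sum.inr (toPart (n - 30) (((mu.parts.erase 6).erase 6).erase 6))

/-- full decoding map -/
def decode (n : ℕ) :
    B6T n ⊕ (Nat.Partition (n - 6) ⊕ Nat.Partition (n - 12)) →
      Nat.Partition n ⊕ Nat.Partition (n - 30)
  | Sum.inl P => Sum.inl P.1
  | Sum.inr (Sum.inl mu) => Sum.inl (toPart n (6 ::ₘ mu.parts))
  | Sum.inr (Sum.inr mu) => decode30 n mu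

lemma filter_helper (c r : Multiset ℕ) (hc : ∀ a ∈ c, a = 12 ∨ a = 18)
    (hr : ∀ a ∈ r, ¬ (a = 6 ∨ a = 12 ∨ a = 18)) :
    (6 ::ₘ 6 ::ₘ (c + r)).filter (fun i => ¬ (i = 6 ∨ i = 12 ∨ i = 18)) = r := by
  rw [Multiset.filter_cons_of_neg _ (by tauto), Multiset.filter_cons_of_neg _ (by tauto),
    Multiset.filter_add, Multiset.filter_eq_nil.2 (fun a ha => by rcases hc a ha with h | h <;> tauto),
    Multiset.filter_eq_self.2 hr, zero_add]

lemma round1 (n : ℕ) (lam : Nat.Partition n) : decode n (encode n lam) = Sum.inl lam := by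
  have hpos : ∀ i ∈ lam.parts, 0 < i := fun i hi => lam.parts_pos hi
  have hsum : lam.parts.sum = n := lam.parts_sum
  rw [encode]
  by_cases hreg : ∀ i ∈ lam.parts, ¬ (6 ∣ i)
  · rw [dif_pos hreg]; rfl
  rw [dif_neg hreg]
  by_cases h6 : 6 ∈ lam.parts
  · rw [dif_pos h6]
    have hn : 6 ≤ n := hsum ▸ mem_le_sum h6
    have hp : (toPart (n - 6) (lam.parts.erase 6)).parts = lam.parts.erase 6 :=
      toPart_parts (by rw [sum_erase' h6]; omega)
        (fun i hi => hpos i (Multiset.mem_of_mem_erase hi))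
    show Sum.inl (toPart n (6 ::ₘ (toPart (n - 6) (lam.parts.erase 6)).parts)) = Sum.inl lam
    rw [hp]
    exact congrArg Sum.inl (toPart_eq lam (Multiset.cons_erase h6))
  rw [dif_neg h6]
  by_cases h12 : 12 ∈ lam.parts
  · rw [dif_pos h12]
    have hn : 12 ≤ n := hsum ▸ mem_le_sum h12
    have hp : (toPart (n - 12) (lam.parts.erase 12)).parts = lam.parts.erase 12 :=
      toPart_parts (by rw [sum_erase' h12]; omega)
        (fun i hi => hpos i (Multiset.mem_of_mem_erase hi))
    show decode30 n _ = Sum.inl lam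
    have hc : (lam.parts.erase 12).count 6 = 0 := by
      rw [Multiset.count_erase_of_ne (by norm_num)]
      exact Multiset.count_eq_zero_of_notMem h6
    rw [decode30, hp, if_pos hc]
    exact congrArg Sum.inl (toPart_eq lam (Multiset.cons_erase h12))
  rw [dif_neg h12]
  by_cases h18 : 18 ∈ lam.parts
  · rw [dif_pos h18]
    have hn : 18 ≤ n := hsum ▸ mem_le_sum h18
    have hp : (toPart (n - 12) (6 ::ₘ lam.parts.erase 18)).parts = 6 ::ₘ lam.parts.erase 18 :=
      toPart_parts (by rw [Multiset.sum_cons, sum_erase' h18]; omega)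
        (by rintro i hi
            rcases Multiset.mem_cons.1 hi with h | h
            · omega
            · exact hpos i (Multiset.mem_of_mem_erase h))
    show decode30 n _ = Sum.inl lam
    have hc : (6 ::ₘ lam.parts.erase 18).count 6 = 1 := by
      rw [Multiset.count_cons_self, Multiset.count_erase_of_ne (by norm_num),
        Multiset.count_eq_zero_of_notMem h6]
    have h12' : ¬ (12 ∈ (6 ::ₘ lam.parts.erase 18)) := by
      rw [Multiset.mem_cons]
      rintro (h | h)
      · norm_num at h
      · exact h12 (Multiset.mem_of_mem_erase h)
    rw [decode30, hp, if_neg (by omega), if_pos hc, if_neg h12', Multiset.erase_cons_head]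
    exact congrArg Sum.inl (toPart_eq lam (Multiset.cons_erase h18))
  rw [dif_neg h18]
  by_cases h24 : 24 ∈ lam.parts
  · rw [dif_pos h24]
    have hn : 24 ≤ n := hsum ▸ mem_le_sum h24
    have hp : (toPart (n - 12) (6 ::ₘ 6 ::ₘ lam.parts.erase 24)).parts
        = 6 ::ₘ 6 ::ₘ lam.parts.erase 24 :=
      toPart_parts (by rw [Multiset.sum_cons, Multiset.sum_cons, sum_erase' h24]; omega)
        (by rintro i hi
            rcases Multiset.mem_cons.1 hi with h | hi
            · omega
            rcases Multiset.mem_cons.1 hi with h | h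
            · omega
            · exact hpos i (Multiset.mem_of_mem_erase h))
    show decode30 n _ = Sum.inl lam
    have hc : (6 ::ₘ 6 ::ₘ lam.parts.erase 24).count 6 = 2 := by
      rw [Multiset.count_cons_self, Multiset.count_cons_self,
        Multiset.count_erase_of_ne (by norm_num), Multiset.count_eq_zero_of_notMem h6]
    have hmem : ¬ (12 ∈ (6 ::ₘ 6 ::ₘ lam.parts.erase 24) ∨ 18 ∈ (6 ::ₘ 6 ::ₘ lam.parts.erase 24)) := by
      rintro (h | h) <;>
      · rcases Multiset.mem_cons.1 h with h' | h'
        · norm_num at h'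
        · rcases Multiset.mem_cons.1 h' with h'' | h''
          · norm_num at h''
          · first
            | exact h12 (Multiset.mem_of_mem_erase h'')
            | exact h18 (Multiset.mem_of_mem_erase h'')
    rw [decode30, hp, if_neg (by omega), if_neg (by omega), if_pos hc, if_neg hmem,
      Multiset.erase_cons_head, Multiset.erase_cons_head]
    exact congrArg Sum.inl (toPart_eq lam (Multiset.cons_erase h24))
  rw [dif_neg h24]
  by_cases h30 : 30 ∈ lam.parts
  · rw [dif_pos h30]
    have hn : 30 ≤ n := hsum ▸ mem_le_sum h30
    have hp : (toPart (n - 12) (6 ::ₘ 12 ::ₘ lam.parts.erase 30)).parts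
        = 6 ::ₘ 12 ::ₘ lam.parts.erase 30 :=
      toPart_parts (by rw [Multiset.sum_cons, Multiset.sum_cons, sum_erase' h30]; omega)
        (by rintro i hi
            rcases Multiset.mem_cons.1 hi with h | hi
            · omega
            rcases Multiset.mem_cons.1 hi with h | h
            · omega
            · exact hpos i (Multiset.mem_of_mem_erase h))
    show decode30 n _ = Sum.inl lam
    have hc : (6 ::ₘ 12 ::ₘ lam.parts.erase 30).count 6 = 1 := by
      rw [Multiset.count_cons_self, Multiset.count_cons_of_ne (by norm_num),
        Multiset.count_erase_of_ne (by norm_num), Multiset.count_eq_zero_of_notMem h6]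
    have hmem : 12 ∈ (6 ::ₘ 12 ::ₘ lam.parts.erase 30) := by
      rw [Multiset.mem_cons, Multiset.mem_cons]; tauto
    rw [decode30, hp, if_neg (by omega), if_pos hc, if_pos hmem, Multiset.erase_cons_head,
      Multiset.erase_cons_head]
    exact congrArg Sum.inl (toPart_eq lam (Multiset.cons_erase h30))
  rw [dif_neg h30]
  -- the general branch : smallest witness M is ≥ 36
  set M := Nat.find (exMul lam hreg) with hMdef
  obtain ⟨hMmem, hMdvd⟩ := Nat.find_spec (exMul lam hreg)
  have hMpos : 0 < M := hpos _ hMmem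
  have hM36 : 36 ≤ M := by
    rcases hMdvd with ⟨k, hk⟩
    rcases Nat.lt_or_ge k 6 with h | h
    · interval_cases k <;> simp_all
    · omega
  have hMn : M ≤ n := hsum ▸ mem_le_sum hMmem
  have hxd : 6 ∣ (M - 24) := by omega
  have hx12 : 12 ≤ M - 24 := by omega
  set X := 6 ::ₘ 6 ::ₘ (code (M - 24) + lam.parts.erase M) with hXdef
  have hsumX : X.sum = n - 12 := by
    rw [hXdef, Multiset.sum_cons, Multiset.sum_cons, Multiset.sum_add,
      sum_code hxd hx12, sum_erase' hMmem]
    omega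
  have hposX : ∀ i ∈ X, 0 < i := by
    rintro i hi
    rw [hXdef, Multiset.mem_cons, Multiset.mem_cons, Multiset.mem_add] at hi
    rcases hi with h | h | h | h
    · omega
    · omega
    · exact code_pos h
    · exact hpos i (Multiset.mem_of_mem_erase h)
  have hp : (toPart (n - 12) X).parts = X := toPart_parts hsumX hposX
  show decode30 n _ = Sum.inl lam
  have hceM : (lam.parts.erase M).count 6 = 0 := by
    rw [Multiset.count_eq_zero]
    intro h; exact h6 (Multiset.mem_of_mem_erase h)
  have hc : X.count 6 = 2 := by
    rw [hXdef, Multiset.count_cons_self, Multiset.count_cons_self,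
      Multiset.count_add, count6_code, hceM]
  have hc12 : X.count 12 = (code (M - 24)).count 12 := by
    rw [hXdef, Multiset.count_cons_of_ne (by norm_num), Multiset.count_cons_of_ne (by norm_num),
      Multiset.count_add, Multiset.count_erase_of_ne (by omega),
      Multiset.count_eq_zero_of_notMem h12, Nat.add_zero]
  have hc18 : X.count 18 = (code (M - 24)).count 18 := by
    rw [hXdef, Multiset.count_cons_of_ne (by norm_num), Multiset.count_cons_of_ne (by norm_num),
      Multiset.count_add, Multiset.count_erase_of_ne (by omega),
      Multiset.count_eq_zero_of_notMem h18, Nat.add_zero]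
  have hmem : 12 ∈ X ∨ 18 ∈ X := by
    rcases code_has hxd hx12 with h | h
    · left
      rw [hXdef, Multiset.mem_cons, Multiset.mem_cons, Multiset.mem_add]; tauto
    · right
      rw [hXdef, Multiset.mem_cons, Multiset.mem_cons, Multiset.mem_add]; tauto
  have hfil : X.filter (fun i => ¬ (i = 6 ∨ i = 12 ∨ i = 18)) = lam.parts.erase M := by
    rw [hXdef]
    refine filter_helper _ _ (fun a ha => mem_code ha) ?_
    intro a ha
    have ha' := Multiset.mem_of_mem_erase ha
    push_neg
    refine ⟨?_, ?_, ?_⟩ <;> rintro rfl <;> [exact h6 ha'; exact h12 ha'; exact h18 ha']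
  have hval : 24 + 12 * X.count 12 + 18 * X.count 18 = M := by
    rw [hc12, hc18]
    have := count12_code hxd hx12
    omega
  rw [decode30, hp, if_neg (by omega), if_neg (by omega), if_pos hc, if_pos hmem, hfil, hval]
  exact congrArg Sum.inl (toPart_eq lam (Multiset.cons_erase hMmem))

/-- encoding of partitions of n-30 -/
def encode30 (n : ℕ) (nu : Nat.Partition (n - 30)) :
    B6T n ⊕ (Nat.Partition (n - 6) ⊕ Nat.Partition (n - 12)) :=
  Sum.inr (Sum.inr (toPart (n - 12) (6 ::ₘ 6 ::ₘ 6 ::ₘ nu.parts)))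

lemma round2 (n : ℕ) (hn : 30 ≤ n) (nu : Nat.Partition (n - 30)) :
    decode n (encode30 n nu) = Sum.inr nu := by
  have hp : (toPart (n - 12) (6 ::ₘ 6 ::ₘ 6 ::ₘ nu.parts)).parts = 6 ::ₘ 6 ::ₘ 6 ::ₘ nu.parts :=
    toPart_parts
      (by rw [Multiset.sum_cons, Multiset.sum_cons, Multiset.sum_cons, nu.parts_sum]; omega)
      (by rintro i hi
          rcases Multiset.mem_cons.1 hi with h | hi
          · omega
          rcases Multiset.mem_cons.1 hi with h | hi
          · omega
          rcases Multiset.mem_cons.1 hi with h | hi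
          · omega
          exact nu.parts_pos hi)
  show decode30 n _ = _
  have hc : (6 ::ₘ 6 ::ₘ 6 ::ₘ nu.parts).count 6 = nu.parts.count 6 + 1 + 1 + 1 := by
    rw [Multiset.count_cons_self, Multiset.count_cons_self, Multiset.count_cons_self]
  rw [decode30, hp, if_neg (by omega), if_neg (by omega), if_neg (by omega),
    Multiset.erase_cons_head, Multiset.erase_cons_head, Multiset.erase_cons_head]
  exact congrArg Sum.inr (toPart_eq nu rfl)

/-- simple two-branch encoding for the upper bound -/
def encB (n : ℕ) (lam : Nat.Partition n) : B6T n ⊕ Nat.Partition (n - 6) :=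
  if hreg : ∀ i ∈ lam.parts, ¬ (6 ∣ i) then Sum.inl ⟨lam, hreg⟩
  else Sum.inr (toPart (n - 6) (lam.parts.erase 6))

def decB (n : ℕ) : B6T n ⊕ Nat.Partition (n - 6) → Nat.Partition n :=
  Sum.elim Subtype.val (fun mu => toPart n (6 ::ₘ mu.parts))

lemma roundB (n : ℕ) (hn : 6 ≤ n) (x : B6T n ⊕ Nat.Partition (n - 6)) :
    encB n (decB n x) = x := by
  rcases x with P | mu
  · show encB n P.1 = _
    rw [encB, dif_pos P.2]
  · show encB n (toPart n (6 ::ₘ mu.parts)) = _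
    have hp : (toPart n (6 ::ₘ mu.parts)).parts = 6 ::ₘ mu.parts :=
      toPart_parts (by rw [Multiset.sum_cons, mu.parts_sum]; omega)
        (by rintro i hi
            rcases Multiset.mem_cons.1 hi with h | hi
            · omega
            exact mu.parts_pos hi)
    have hreg : ¬ ∀ i ∈ (toPart n (6 ::ₘ mu.parts)).parts, ¬ (6 ∣ i) := by
      intro hall
      exact hall 6 (by rw [hp]; exact Multiset.mem_cons_self _ _) ⟨1, rfl⟩
    rw [encB, dif_neg hreg, hp, Multiset.erase_cons_head]
    exact congrArg Sum.inr (toPart_eq mu rfl)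

lemma roundB' (n : ℕ) (hn : n < 12) (lam : Nat.Partition n) : decB n (encB n lam) = lam := by
  rw [encB]
  by_cases hreg : ∀ i ∈ lam.parts, ¬ (6 ∣ i)
  · rw [dif_pos hreg]; rfl
  rw [dif_neg hreg]
  obtain ⟨i, hi, hd⟩ := exMul lam hreg
  have h1 : 0 < i := lam.parts_pos hi
  have h2 : i ≤ n := lam.parts_sum ▸ mem_le_sum hi
  have h3 : i = 6 := by omega
  subst h3
  have hp : (toPart (n - 6) (lam.parts.erase 6)).parts = lam.parts.erase 6 :=
    toPart_parts (by rw [sum_erase' hi, lam.parts_sum])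
      (fun j hj => lam.parts_pos (Multiset.mem_of_mem_erase hj))
  show toPart n (6 ::ₘ _) = lam
  rw [hp]
  exact toPart_eq lam (Multiset.cons_erase hi)

lemma card_b6 (n : ℕ) : Fintype.card (B6T n) = b6 n := rfl

lemma lemC (n : ℕ) : pnat n ≤ b6 n + (pnat (n - 6) + pnat (n - 12)) := by
  have hinj : Function.Injective (encode n) := by
    intro a b h
    have h2 := congrArg (decode n) h
    rw [round1, round1] at h2
    exact Sum.inl_injective h2
  calc pnat n = Fintype.card (Nat.Partition n) := rfl
    _ ≤ Fintype.card (B6T n ⊕ (Nat.Partition (n - 6) ⊕ Nat.Partition (n - 12))) :=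
        Fintype.card_le_of_injective _ hinj
    _ = b6 n + (pnat (n - 6) + pnat (n - 12)) := by
        rw [Fintype.card_sum, Fintype.card_sum]; rfl

lemma lemD (n : ℕ) (hn : 30 ≤ n) :
    pnat n + pnat (n - 30) ≤ b6 n + (pnat (n - 6) + pnat (n - 12)) := by
  have hinj : Function.Injective
      (Sum.elim (encode n) (encode30 n) :
        Nat.Partition n ⊕ Nat.Partition (n - 30) →
          B6T n ⊕ (Nat.Partition (n - 6) ⊕ Nat.Partition (n - 12))) := by
    intro a b h
    have h2 := congrArg (decode n) h
    rcases a with a | a <;> rcases b with b | b <;>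
      simp only [Sum.elim_inl, Sum.elim_inr, round1, round2 n hn] at h2 <;> simp_all
  calc pnat n + pnat (n - 30)
      = Fintype.card (Nat.Partition n ⊕ Nat.Partition (n - 30)) := by
        rw [Fintype.card_sum]; rfl
    _ ≤ Fintype.card (B6T n ⊕ (Nat.Partition (n - 6) ⊕ Nat.Partition (n - 12))) :=
        Fintype.card_le_of_injective _ hinj
    _ = b6 n + (pnat (n - 6) + pnat (n - 12)) := by
        rw [Fintype.card_sum, Fintype.card_sum]; rfl

lemma lemUp0 (n : ℕ) : b6 n ≤ pnat n :=
  Fintype.card_le_of_injective (Subtype.val : B6T n → Nat.Partition n) Subtype.val_injective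

lemma lemUp (n : ℕ) (hn : 6 ≤ n) : b6 n + pnat (n - 6) ≤ pnat n := by
  have hinj : Function.Injective (decB n) := by
    intro a b h
    have h2 := congrArg (encB n) h
    rw [roundB n hn, roundB n hn] at h2
    exact h2
  calc b6 n + pnat (n - 6) = Fintype.card (B6T n ⊕ Nat.Partition (n - 6)) := by
        rw [Fintype.card_sum]; rfl
    _ ≤ Fintype.card (Nat.Partition n) := Fintype.card_le_of_injective _ hinj
    _ = pnat n := rfl

lemma lemA (n : ℕ) (hn : n < 6) : pnat n ≤ b6 n := by
  have hinj : Function.Injective (fun lam : Nat.Partition n =>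
      (⟨lam, fun i hi hd => by
        have h1 := lam.parts_pos hi
        have h2 := lam.parts_sum ▸ mem_le_sum hi
        rcases hd with ⟨k, hk⟩
        omega⟩ : B6T n)) := by
    intro a b h
    exact congrArg Subtype.val h
  exact Fintype.card_le_of_injective _ hinj

lemma lemB (n : ℕ) (hn : n < 12) : pnat n ≤ b6 n + pnat (n - 6) := by
  have hinj : Function.Injective (encB n) := by
    intro a b h
    have h2 := congrArg (decB n) h
    rw [roundB' n hn, roundB' n hn] at h2
    exact h2
  calc pnat n = Fintype.card (Nat.Partition n) := rfl
    _ ≤ Fintype.card (B6T n ⊕ Nat.Partition (n - 6)) := Fintype.card_le_of_injective _ hinj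
    _ = b6 n + pnat (n - 6) := by rw [Fintype.card_sum]; rfl

lemma pz_nat (n : ℕ) : pz (n : ℤ) = (pnat n : ℤ) := by
  rw [pz, if_pos (by positivity)]
  norm_num

lemma pz_sub_of_le (n k : ℕ) (h : k ≤ n) : pz ((n : ℤ) - (k : ℤ)) = (pnat (n - k) : ℤ) := by
  rw [pz, if_pos (by omega)]
  congr 2
  omega

lemma pz_sub_of_lt (n k : ℕ) (h : n < k) : pz ((n : ℤ) - (k : ℤ)) = 0 := by
  rw [pz, if_neg (by omega)]

theorem stmt19 (n : ℕ) :
    pz (n : ℤ) - pz ((n : ℤ) - 6) - pz ((n : ℤ) - 12) + pz ((n : ℤ) - 30) ≤ (b6 n : ℤ) ∧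
    (b6 n : ℤ) ≤ pz (n : ℤ) - pz ((n : ℤ) - 6) := by
  have c6 : ((6 : ℕ) : ℤ) = (6 : ℤ) := by norm_num
  have c12 : ((12 : ℕ) : ℤ) = (12 : ℤ) := by norm_num
  have c30 : ((30 : ℕ) : ℤ) = (30 : ℤ) := by norm_num
  rw [pz_nat]
  constructor
  · -- lower bound
    rcases lt_or_ge n 6 with h6 | h6
    · rw [← c6, ← c12, ← c30, pz_sub_of_lt n 6 h6, pz_sub_of_lt n 12 (by omega),
        pz_sub_of_lt n 30 (by omega)]
      have := lemA n h6
      omega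
    rcases lt_or_ge n 12 with h12 | h12
    · rw [← c6, ← c12, ← c30, pz_sub_of_le n 6 h6, pz_sub_of_lt n 12 h12,
        pz_sub_of_lt n 30 (by omega)]
      have := lemB n h12
      omega
    rcases lt_or_ge n 30 with h30 | h30
    · rw [← c6, ← c12, ← c30, pz_sub_of_le n 6 h6, pz_sub_of_le n 12 h12,
        pz_sub_of_lt n 30 h30]
      have := lemC n
      omega
    · rw [← c6, ← c12, ← c30, pz_sub_of_le n 6 h6, pz_sub_of_le n 12 h12,
        pz_sub_of_le n 30 h30]
      have := lemD n h30
      omega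
  · -- upper bound
    rcases lt_or_ge n 6 with h6 | h6
    · rw [← c6, pz_sub_of_lt n 6 h6]
      have := lemUp0 n
      omega
    · rw [← c6, pz_sub_of_le n 6 h6]
      have := lemUp n h6
      omega
end
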